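/- arXiv:1408.1741 — 9 statements merged into one kernel-verified Lean document; each statement's English description precedes it below -/
import Mathlib

section
/- Let α > 0 and k ∈ ℝ. Let u : ℝ → ℝ be continuously differentiable with u and u′ square-integrable on ℝ and u(y) → 0 as y → −∞. Then for every x ∈ ℝ, (1/α)∫_{−∞}^{x} e^{(y−x)/α} ((α²/2)u′(y)² + u(y)² + 2k u(y)) dy ≥ (u(x)+k)²/2 − k². -/
open MeasureTheory Filter

lemma dgh_exp_integrableOn (c x : ℝ) (hc : 0 < c) :
    MeasureTheory.IntegrableOn (fun y => Real.exp (c * (y - x))) (Set.Iic x) := by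
  have hcont : Continuous fun y => Real.exp (c * (y - x)) := by continuity
  have hderiv : ∀ y : ℝ,
      HasDerivAt (fun y => (1 / c) * Real.exp (c * (y - x))) (Real.exp (c * (y - x))) y := by
    intro y
    have h1 : HasDerivAt (fun y : ℝ => c * (y - x)) c y := by
      simpa using ((hasDerivAt_id y).sub_const x).const_mul c
    have h2 := (h1.exp).const_mul (1 / c)
    refine h2.congr_deriv ?_
    field_simp
  refine MeasureTheory.integrableOn_Iic_of_intervalIntegral_norm_bounded (1 / c) x
    (fun a => (hcont.intervalIntegrable a x).1) tendsto_id ?_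
  filter_upwards with a
  simp only [Real.norm_eq_abs, abs_of_pos (Real.exp_pos _)]
  rw [intervalIntegral.integral_eq_sub_of_hasDerivAt (fun y _ => hderiv y)
    (hcont.intervalIntegrable a x)]
  have := Real.exp_pos (c * (a - x))
  simp only [sub_self, mul_zero, Real.exp_zero, mul_one]
  nlinarith [one_div_pos.mpr hc]

/-- Lemma 3.1 (first inequality): for `u ∈ H¹` vanishing at `-∞`,
`(p - α ∂ₓp) ∗ ((α²/2)uₓ² + u² + 2ku) ≥ (u+k)²/2 - k²`, written as the
explicit one-sided exponential integral. -/
theorem dgh_convolution_estimate_left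
    (α k : ℝ) (hα : 0 < α)
    (u u' : ℝ → ℝ)
    (hderiv : ∀ x, HasDerivAt u (u' x) x)
    (hcont : Continuous u')
    (hu_sq : Integrable (fun y => (u y) ^ 2))
    (hu'_sq : Integrable (fun y => (u' y) ^ 2))
    (hlim : Tendsto u atBot (nhds 0)) :
    ∀ x : ℝ,
      (1 / α) * ∫ y in Set.Iic x,
          Real.exp ((y - x) / α) *
            ((α ^ 2 / 2) * (u' y) ^ 2 + (u y) ^ 2 + 2 * k * u y)
        ≥ (u x + k) ^ 2 / 2 - k ^ 2 := by
  intro x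
  have hu_diff : Differentiable ℝ u := fun y => (hderiv y).differentiableAt
  have hu_cont : Continuous u := hu_diff.continuous
  set e : ℝ → ℝ := fun y => Real.exp ((y - x) / α) with he_def
  have he_cont : Continuous e := by
    apply Real.continuous_exp.comp; continuity
  have he_pos : ∀ y, 0 < e y := fun y => Real.exp_pos _
  have he_le_one : ∀ y ∈ Set.Iic x, e y ≤ 1 := by
    intro y hy
    have h0 : (y - x) / α ≤ 0 :=
      div_nonpos_of_nonpos_of_nonneg (sub_nonpos.mpr hy.out) hα.le
    have h2 := Real.exp_le_exp.mpr h0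
    rw [Real.exp_zero] at h2
    exact h2
  -- basic integrability facts on Iic x
  have hu2 : IntegrableOn (fun y => (u y) ^ 2) (Set.Iic x) := hu_sq.integrableOn
  have hu'2 : IntegrableOn (fun y => (u' y) ^ 2) (Set.Iic x) := hu'_sq.integrableOn
  have he_int : IntegrableOn e (Set.Iic x) := by
    have := dgh_exp_integrableOn (1 / α) x (by positivity)
    refine this.congr_fun (fun y _ => ?_) measurableSet_Iic
    simp [he_def, div_eq_mul_inv, mul_comm]
  have he2_int : IntegrableOn (fun y => (e y) ^ 2) (Set.Iic x) := by
    have := dgh_exp_integrableOn (2 / α) x (by positivity)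
    refine this.congr_fun (fun y _ => ?_) measurableSet_Iic
    simp only [he_def, ← Real.exp_nat_mul, ← Real.exp_add]
    ring_nf
  -- products with e : all integrable on Iic x
  have key_bound : ∀ (f g : ℝ → ℝ), Continuous f → Continuous g →
      IntegrableOn (fun y => (f y) ^ 2) (Set.Iic x) →
      IntegrableOn (fun y => (g y) ^ 2) (Set.Iic x) →
      IntegrableOn (fun y => f y * g y) (Set.Iic x) := by
    intro f g hf hg hf2 hg2
    have hbd : Integrable (fun y => (1 / 2 : ℝ) * ((f y) ^ 2 + (g y) ^ 2))
        (volume.restrict (Set.Iic x)) := (hf2.add hg2).const_mul (1 / 2 : ℝ)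
    refine Integrable.mono' hbd ((hf.mul hg).aestronglyMeasurable) ?_
    filter_upwards with y
    rw [Real.norm_eq_abs, abs_le]
    constructor
    · nlinarith [sq_nonneg (f y + g y)]
    · nlinarith [sq_nonneg (f y - g y)]
  have hB1 : IntegrableOn (fun y => e y * (u' y) ^ 2) (Set.Iic x) := by
    refine Integrable.mono' hu'2 ((he_cont.mul (hcont.pow 2)).aestronglyMeasurable) ?_
    filter_upwards [ae_restrict_mem measurableSet_Iic] with y hy
    rw [Real.norm_eq_abs, abs_of_nonneg (by positivity)]
    have h1 := he_le_one y hy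
    nlinarith [sq_nonneg (u' y), he_pos y]
  have hB2 : IntegrableOn (fun y => e y * (u y) ^ 2) (Set.Iic x) := by
    refine Integrable.mono' hu2 ((he_cont.mul (hu_cont.pow 2)).aestronglyMeasurable) ?_
    filter_upwards [ae_restrict_mem measurableSet_Iic] with y hy
    rw [Real.norm_eq_abs, abs_of_nonneg (by positivity)]
    have h1 := he_le_one y hy
    nlinarith [sq_nonneg (u y), he_pos y]
  have hB3 : IntegrableOn (fun y => e y * u y) (Set.Iic x) :=
    key_bound e u he_cont hu_cont he2_int hu2
  have hB5 : IntegrableOn (fun y => e y * u' y) (Set.Iic x) :=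
    key_bound e u' he_cont hcont he2_int hu'2
  have hB4 : IntegrableOn (fun y => e y * (u y * u' y)) (Set.Iic x) := by
    have hbd : Integrable (fun y => (1 / 2 : ℝ) * ((u y) ^ 2 + (u' y) ^ 2))
        (volume.restrict (Set.Iic x)) := (hu2.add hu'2).const_mul (1 / 2 : ℝ)
    refine Integrable.mono' hbd
      ((he_cont.mul (hu_cont.mul hcont)).aestronglyMeasurable) ?_
    filter_upwards [ae_restrict_mem measurableSet_Iic] with y hy
    have h1 := he_le_one y hy
    have h2 := he_pos y
    have h3 : 0 ≤ e y * (((u y) ^ 2 + (u' y) ^ 2) / 2 + u y * u' y) :=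
      mul_nonneg h2.le (by nlinarith [sq_nonneg (u y + u' y)])
    have h4 : 0 ≤ e y * (((u y) ^ 2 + (u' y) ^ 2) / 2 - u y * u' y) :=
      mul_nonneg h2.le (by nlinarith [sq_nonneg (u y - u' y)])
    have h5 : 0 ≤ (1 - e y) * ((u y) ^ 2 + (u' y) ^ 2) :=
      mul_nonneg (by linarith) (by positivity)
    rw [Real.norm_eq_abs, abs_le]
    constructor
    · nlinarith
    · nlinarith
  -- the integrand is integrable on Iic x
  have hmain_int : IntegrableOn
      (fun y => e y * ((α ^ 2 / 2) * (u' y) ^ 2 + (u y) ^ 2 + 2 * k * u y))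
      (Set.Iic x) := by
    have : (fun y => e y * ((α ^ 2 / 2) * (u' y) ^ 2 + (u y) ^ 2 + 2 * k * u y))
        = fun y => (α ^ 2 / 2) * (e y * (u' y) ^ 2) + e y * (u y) ^ 2
            + (2 * k) * (e y * u y) := by
      funext y; ring
    rw [this]
    exact ((hB1.const_mul _).add hB2).add (hB3.const_mul _)
  -- the function W and its derivative W'
  set W : ℝ → ℝ := fun y => e y * ((u y + k) ^ 2 / 2 - k ^ 2) with hW_def
  set W' : ℝ → ℝ := fun y =>
    (1 / α) * e y * ((u y + k) ^ 2 / 2 - k ^ 2) + e y * ((u y + k) * u' y) with hW'_def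
  have hW'_int : IntegrableOn W' (Set.Iic x) := by
    have : W' = fun y => (1 / (2 * α)) * (e y * (u y) ^ 2) + (k / α) * (e y * u y)
        + (-(k ^ 2) / (2 * α)) * e y + (e y * (u y * u' y)) + k * (e y * u' y) := by
      funext y
      simp only [hW'_def]
      field_simp
      ring
    rw [this]
    exact ((((hB2.const_mul _).add (hB3.const_mul _)).add (he_int.const_mul _)).add hB4).add
      (hB5.const_mul _)
  have hW_deriv : ∀ y : ℝ, HasDerivAt W (W' y) y := by
    intro y
    have h1 : HasDerivAt (fun y : ℝ => (y - x) / α) (1 / α) y := by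
      simpa using ((hasDerivAt_id y).sub_const x).div_const α
    have h2 : HasDerivAt e ((1 / α) * e y) y := by
      simpa [he_def, mul_comm] using h1.exp
    have h3 : HasDerivAt (fun y => (u y + k) ^ 2 / 2 - k ^ 2) ((u y + k) * u' y) y := by
      have h4 : HasDerivAt (fun y => u y + k) (u' y) y := (hderiv y).add_const k
      have h5 := (h4.pow 2).div_const 2
      have h6 := h5.sub_const (k ^ 2)
      refine h6.congr_deriv ?_
      ring
    exact h2.mul h3
  have hW_tendsto : Tendsto W atBot (nhds 0) := by
    have he_tendsto : Tendsto e atBot (nhds 0) := by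
      apply Real.tendsto_exp_atBot.comp
      apply Tendsto.atBot_div_const hα
      exact tendsto_atBot_add_const_right _ (-x) tendsto_id
    have hinner : Tendsto (fun y => (u y + k) ^ 2 / 2 - k ^ 2) atBot
        (nhds ((0 + k) ^ 2 / 2 - k ^ 2)) := by
      exact (((hlim.add_const k).pow 2).div_const 2).sub_const (k ^ 2)
    have := he_tendsto.mul hinner
    simpa using this
  have hFTC : ∫ y in Set.Iic x, W' y = (u x + k) ^ 2 / 2 - k ^ 2 := by
    have := integral_Iic_of_hasDerivAt_of_tendsto' (fun y _ => hW_deriv y) hW'_int hW_tendsto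
    rw [this]
    simp [hW_def, he_def]
  -- pointwise inequality W' ≤ (1/α) * integrand
  have hpt : ∀ y ∈ Set.Iic x, W' y ≤
      (1 / α) * (e y * ((α ^ 2 / 2) * (u' y) ^ 2 + (u y) ^ 2 + 2 * k * u y)) := by
    intro y _
    rw [← sub_nonneg]
    have h1 : (1 / α) * (e y * ((α ^ 2 / 2) * (u' y) ^ 2 + (u y) ^ 2 + 2 * k * u y)) - W' y
        = (1 / (2 * α)) * e y * (α * u' y - (u y + k)) ^ 2 := by
      simp only [hW'_def]
      field_simp
      ring
    rw [h1]
    have := he_pos y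
    positivity
  -- conclude
  rw [ge_iff_le, ← hFTC, ← integral_const_mul]
  exact setIntegral_mono_on hW'_int (hmain_int.const_mul _) measurableSet_Iic hpt
end

section
/- Let α > 0 and k ∈ ℝ. Let u : ℝ → ℝ be continuously differentiable with u and u′ square-integrable on ℝ and u(y) → 0 as y → +∞. Then for every x ∈ ℝ, (1/α)∫_{x}^{∞} e^{(x−y)/α} ((α²/2)u′(y)² + u(y)² + 2k u(y)) dy ≥ (u(x)+k)²/2 − k². -/
open MeasureTheory Filter

set_option maxHeartbeats 4000000 in
/-- Lemma 3.1 (second inequality): for `u ∈ H¹` vanishing at `+∞`,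
`(p + α ∂ₓp) ∗ ((α²/2)uₓ² + u² + 2ku) ≥ (u+k)²/2 - k²`, written as the
explicit one-sided exponential integral. -/
theorem dgh_convolution_estimate_right
    (α k : ℝ) (hα : 0 < α)
    (u u' : ℝ → ℝ)
    (hderiv : ∀ x, HasDerivAt u (u' x) x)
    (hcont : Continuous u')
    (hu_sq : Integrable (fun y => (u y) ^ 2))
    (hu'_sq : Integrable (fun y => (u' y) ^ 2))
    (hlim : Tendsto u atTop (nhds 0)) :
    ∀ x : ℝ,
      (1 / α) * ∫ y in Set.Ici x,
          Real.exp ((x - y) / α) *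
            ((α ^ 2 / 2) * (u' y) ^ 2 + (u y) ^ 2 + 2 * k * u y)
        ≥ (u x + k) ^ 2 / 2 - k ^ 2 := by
  intro x
  have hucont : Continuous u := by
    rw [continuous_iff_continuousAt]
    exact fun y => (hderiv y).continuousAt
  set E : ℝ → ℝ := fun y => Real.exp ((x - y) / α) with hE_def
  have hEcont : Continuous E := by
    exact (Continuous.div_const (continuous_const.sub continuous_id) α).rexp
  have hEpos : ∀ y, 0 < E y := fun y => Real.exp_pos _
  have hEle : ∀ y ∈ Set.Ioi x, E y ≤ 1 := by
    intro y hy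
    have : (x - y) / α ≤ 0 := div_nonpos_of_nonpos_of_nonneg (by simp at hy; linarith) hα.le
    calc E y ≤ Real.exp 0 := Real.exp_le_exp.mpr this
    _ = 1 := Real.exp_zero
  -- integrability of E
  have hE_int : IntegrableOn E (Set.Ioi x) := by
    have h0 : (0:ℝ) < 1/α := by positivity
    have h := (exp_neg_integrableOn_Ioi x h0).const_mul (Real.exp (x / α))
    refine h.congr ?_
    filter_upwards [ae_restrict_mem measurableSet_Ioi] with y _
    rw [← Real.exp_add]; congr 1; ring
  -- generic integrability tool
  have key : ∀ (f g : ℝ → ℝ), Continuous f → IntegrableOn g (Set.Ioi x) →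
      (∀ y ∈ Set.Ioi x, |E y * f y| ≤ g y) →
      IntegrableOn (fun y => E y * f y) (Set.Ioi x) := by
    intro f g hf hg hbd
    refine Integrable.mono' hg ((hEcont.mul hf).aestronglyMeasurable) ?_
    filter_upwards [ae_restrict_mem measurableSet_Ioi] with y hy using hbd y hy
  have habs : ∀ y ∈ Set.Ioi x, ∀ c : ℝ, |E y * c| = E y * |c| := by
    intro y _ c
    rw [abs_mul, abs_of_pos (hEpos y)]
  have heu'2 : IntegrableOn (fun y => E y * (u' y) ^ 2) (Set.Ioi x) := by
    refine key _ _ (hcont.pow 2) hu'_sq.integrableOn ?_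
    intro y hy
    rw [habs y hy, abs_of_nonneg (sq_nonneg (u' y))]
    exact mul_le_of_le_one_left (sq_nonneg _) (hEle y hy)
  have heu2 : IntegrableOn (fun y => E y * (u y) ^ 2) (Set.Ioi x) := by
    refine key _ _ (hucont.pow 2) hu_sq.integrableOn ?_
    intro y hy
    rw [habs y hy, abs_of_nonneg (sq_nonneg (u y))]
    exact mul_le_of_le_one_left (sq_nonneg _) (hEle y hy)
  have heu : IntegrableOn (fun y => E y * u y) (Set.Ioi x) := by
    have hg : IntegrableOn (fun y => (E y + (u y) ^ 2) / 2) (Set.Ioi x) :=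
      (hE_int.add hu_sq.integrableOn).div_const 2
    refine key _ _ hucont hg ?_
    intro y hy
    rw [habs y hy]
    have h2 : 2 * |u y| ≤ 1 + u y ^ 2 := by nlinarith [sq_nonneg (|u y| - 1), sq_abs (u y)]
    have h3 : E y * (2 * |u y|) ≤ E y * (1 + u y ^ 2) :=
      mul_le_mul_of_nonneg_left h2 (hEpos y).le
    have h4 : E y * u y ^ 2 ≤ u y ^ 2 := mul_le_of_le_one_left (sq_nonneg _) (hEle y hy)
    have h5 : E y ≤ 1 := hEle y hy
    nlinarith
  have heu' : IntegrableOn (fun y => E y * u' y) (Set.Ioi x) := by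
    have hg : IntegrableOn (fun y => (E y + (u' y) ^ 2) / 2) (Set.Ioi x) :=
      (hE_int.add hu'_sq.integrableOn).div_const 2
    refine key _ _ hcont hg ?_
    intro y hy
    rw [habs y hy]
    have h2 : 2 * |u' y| ≤ 1 + u' y ^ 2 := by nlinarith [sq_nonneg (|u' y| - 1), sq_abs (u' y)]
    have h3 : E y * (2 * |u' y|) ≤ E y * (1 + u' y ^ 2) :=
      mul_le_mul_of_nonneg_left h2 (hEpos y).le
    have h4 : E y * u' y ^ 2 ≤ u' y ^ 2 := mul_le_of_le_one_left (sq_nonneg _) (hEle y hy)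
    have h5 : E y ≤ 1 := hEle y hy
    nlinarith
  have heuu' : IntegrableOn (fun y => E y * (u y * u' y)) (Set.Ioi x) := by
    have hg : IntegrableOn (fun y => ((u y) ^ 2 + (u' y) ^ 2) / 2) (Set.Ioi x) :=
      (hu_sq.integrableOn.add hu'_sq.integrableOn).div_const 2
    refine key _ _ (hucont.mul hcont) hg ?_
    intro y hy
    rw [habs y hy]
    have h2 : 2 * |u y * u' y| ≤ u y ^ 2 + u' y ^ 2 := by
      rw [abs_mul]
      nlinarith [sq_nonneg (|u y| - |u' y|), sq_abs (u y), sq_abs (u' y)]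
    have h4 : E y * |u y * u' y| ≤ |u y * u' y| :=
      mul_le_of_le_one_left (abs_nonneg _) (hEle y hy)
    linarith
  -- the integrand
  set I : ℝ → ℝ := fun y => (α ^ 2 / 2) * (u' y) ^ 2 + (u y) ^ 2 + 2 * k * u y with hI_def
  have hEI_int : IntegrableOn (fun y => E y * I y) (Set.Ioi x) := by
    have h := ((heu'2.const_mul (α ^ 2 / 2)).add heu2).add (heu.const_mul (2 * k))
    refine h.congr ?_
    filter_upwards [ae_restrict_mem measurableSet_Ioi] with y _
    simp only [hI_def, Pi.add_apply, Pi.sub_apply]; ring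
  -- auxiliary function and its derivative
  set F : ℝ → ℝ := fun y => E y * ((u y + k) ^ 2 - 2 * k ^ 2) / 2 with hF_def
  set F' : ℝ → ℝ := fun y =>
    E y * ((u y + k) * u' y - ((u y + k) ^ 2 - 2 * k ^ 2) / (2 * α)) with hF'_def
  have hEderiv : ∀ y, HasDerivAt E (E y * (-(1 / α))) y := by
    intro y
    have h1 : HasDerivAt (fun y : ℝ => (x - y) / α) (-(1 / α)) y := by
      have := ((hasDerivAt_id y).const_sub x).div_const α
      exact this.congr_deriv (by ring)
    exact h1.exp
  have hFderiv : ∀ y, HasDerivAt F (F' y) y := by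
    intro y
    have hg : HasDerivAt (fun y => (u y + k) ^ 2 - 2 * k ^ 2)
        (2 * (u y + k) ^ 1 * u' y) y := (((hderiv y).add_const k).pow 2).sub_const _
    have := ((hEderiv y).mul hg).div_const 2
    refine this.congr_deriv ?_
    simp only [hF'_def]
    field_simp
    ring
  have hF'_int : IntegrableOn F' (Set.Ioi x) := by
    have h := ((((heuu'.add (heu'.const_mul k)).sub (heu2.const_mul (1 / (2 * α)))).sub
      (heu.const_mul (k / α))).add (hE_int.const_mul (k ^ 2 / (2 * α))))
    refine h.congr ?_
    filter_upwards [ae_restrict_mem measurableSet_Ioi] with y _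
    simp only [hF'_def, Pi.add_apply, Pi.sub_apply]
    field_simp
    ring
  have hFtend : Tendsto F atTop (nhds 0) := by
    have hEtend : Tendsto E atTop (nhds 0) := by
      have h1 : Tendsto (fun y : ℝ => (x - y) / α) atTop atBot := by
        apply Tendsto.atBot_div_const hα
        have hneg : Tendsto (fun y : ℝ => -y) atTop atBot := tendsto_neg_atTop_atBot
        have := tendsto_atBot_add_const_left atTop x hneg
        refine this.congr (fun y => by ring)
      exact Real.tendsto_exp_atBot.comp h1
    have hgtend : Tendsto (fun y => (u y + k) ^ 2 - 2 * k ^ 2) atTop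
        (nhds ((0 + k) ^ 2 - 2 * k ^ 2)) :=
      (((hlim.add tendsto_const_nhds).pow 2).sub tendsto_const_nhds)
    have := (hEtend.mul hgtend).div_const 2
    simpa using this
  have hFTC : ∫ y in Set.Ioi x, F' y = 0 - F x :=
    integral_Ioi_of_hasDerivAt_of_tendsto' (fun y _ => hFderiv y) hF'_int hFtend
  -- pointwise inequality
  have hpt : ∀ y ∈ Set.Ioi x, -F' y ≤ (1 / α) * (E y * I y) := by
    intro y _
    have hid : (1 / α) * (E y * I y) + F' y = E y * (α * u' y + u y + k) ^ 2 / (2 * α) := by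
      simp only [hI_def, hF'_def]
      field_simp
      ring
    have hnn : 0 ≤ E y * (α * u' y + u y + k) ^ 2 / (2 * α) := by positivity
    linarith
  -- put everything together
  have hmono : ∫ y in Set.Ioi x, -F' y ≤ ∫ y in Set.Ioi x, (1 / α) * (E y * I y) :=
    setIntegral_mono_on hF'_int.neg (hEI_int.const_mul _) measurableSet_Ioi hpt
  have h1 : ∫ y in Set.Ioi x, -F' y = F x := by
    rw [integral_neg, hFTC]; ring
  have h2 : ∫ y in Set.Ioi x, (1 / α) * (E y * I y) = (1 / α) * ∫ y in Set.Ioi x, E y * I y :=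
    integral_const_mul _ _
  have h3 : (∫ y in Set.Ici x, E y * I y) = ∫ y in Set.Ioi x, E y * I y :=
    integral_Ici_eq_integral_Ioi
  have hFx : F x = (u x + k) ^ 2 / 2 - k ^ 2 := by
    simp only [hF_def, hE_def]
    rw [sub_self, zero_div, Real.exp_zero]
    ring
  rw [ge_iff_le, ← hFx, ← h1]
  calc ∫ y in Set.Ioi x, -F' y ≤ ∫ y in Set.Ioi x, (1 / α) * (E y * I y) := hmono
    _ = (1 / α) * ∫ y in Set.Ici x, E y * I y := by rw [h2, h3]
end

section
/- Let α > 0 and k ∈ ℝ. Let u : ℝ → ℝ be continuously differentiable with u and u′ square-integrable on ℝ and u(y) → 0 as |y| → ∞. Then for every x ∈ ℝ, ∫_ℝ (1/(2α)) e^{−|x−y|/α} ((α²/2)u′(y)² + (u(y)+k)²) dy ≥ (u(x)+k)²/2. -/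
open MeasureTheory Filter
open Set Real

/-- Lemma 3.2: `p ∗ ((α²/2)uₓ² + (u+k)²) ≥ (u+k)²/2`. -/
theorem dgh_convolution_estimate_full
    (α k : ℝ) (hα : 0 < α)
    (u u' : ℝ → ℝ)
    (hderiv : ∀ x, HasDerivAt u (u' x) x)
    (hcont : Continuous u')
    (hu_sq : Integrable (fun y => (u y) ^ 2))
    (hu'_sq : Integrable (fun y => (u' y) ^ 2))
    (hbot : Tendsto u atBot (nhds 0))
    (htop : Tendsto u atTop (nhds 0)) :
    ∀ x : ℝ,
      (∫ y : ℝ, (1 / (2 * α)) * Real.exp (-|x - y| / α) *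
          ((α ^ 2 / 2) * (u' y) ^ 2 + (u y + k) ^ 2))
        ≥ (u x + k) ^ 2 / 2 := by
  intro x
  have hu_cont : Continuous u := by
    rw [continuous_iff_continuousAt]; exact fun y => (hderiv y).continuousAt
  set W : ℝ → ℝ := fun y => Real.exp (-|x - y| / α) with hWdef
  have hWpos : ∀ y, 0 < W y := fun y => Real.exp_pos _
  have hWle : ∀ y, W y ≤ 1 := fun y => by
    apply Real.exp_le_one_iff.mpr; exact div_nonpos_of_nonpos_of_nonneg (by simp [abs_nonneg]) hα.le
  have hW_cont : Continuous W := by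
    apply Real.continuous_exp.comp; exact ((continuous_const.sub continuous_id).abs.neg).div_const α
  -- Integrability of W
  have hb : (0:ℝ) < 1/α := by positivity
  have hIoi : IntegrableOn (fun z : ℝ => Real.exp (-|z| / α)) (Ioi 0) :=
    (exp_neg_integrableOn_Ioi 0 hb).congr_fun
      (fun z hz => by rw [abs_of_pos hz]; ring_nf) measurableSet_Ioi
  have hW0 : Integrable (fun z : ℝ => Real.exp (-|z| / α)) := by
    rw [← integrableOn_univ, ← Iic_union_Ioi (a := (0:ℝ)), integrableOn_union]
    refine ⟨?_, hIoi⟩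
    rw [← (Measure.measurePreserving_neg (volume : Measure ℝ)).integrableOn_comp_preimage
        (Homeomorph.neg ℝ).measurableEmbedding]
    simp only [Function.comp_def, abs_neg, neg_preimage, neg_Iic, neg_zero]
    rw [integrableOn_Ici_iff_integrableOn_Ioi]
    exact hIoi
  have hW : Integrable W := by
    exact (Integrable.comp_sub_right hW0 x).congr
      (Eventually.of_forall fun y => by simp [hWdef, abs_sub_comm])
  -- component integrabilities
  have key : ∀ g : ℝ → ℝ, Continuous g → Integrable (fun y => g y ^ 2) →
      Integrable (fun y => W y * g y) := by
    intro g hg hg2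
    refine Integrable.mono' ((hW.add hg2).div_const 2)
      ((hW_cont.mul hg).aestronglyMeasurable) (Eventually.of_forall fun y => ?_)
    have h1 := hWpos y
    have h2 := hWle y
    have h3 := sq_nonneg (|g y| - 1)
    have h4 : |g y|^2 = g y ^2 := sq_abs _
    rw [Real.norm_eq_abs, abs_mul, abs_of_pos h1]
    simp only [Pi.add_apply]
    nlinarith [abs_nonneg (g y)]
  have hWu : Integrable (fun y => W y * u y) := key u hu_cont hu_sq
  have hWu' : Integrable (fun y => W y * u' y) := key u' hcont hu'_sq
  have hWu2 : Integrable (fun y => W y * u y ^ 2) :=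
    hu_sq.bdd_mul hW_cont.aestronglyMeasurable (c := 1) (Eventually.of_forall fun y => by
      rw [Real.norm_eq_abs, abs_of_pos (hWpos y)]; exact hWle y)
  have hWu'2 : Integrable (fun y => W y * u' y ^ 2) :=
    hu'_sq.bdd_mul hW_cont.aestronglyMeasurable (c := 1) (Eventually.of_forall fun y => by
      rw [Real.norm_eq_abs, abs_of_pos (hWpos y)]; exact hWle y)
  have hWuu' : Integrable (fun y => W y * (u y * u' y)) := by
    refine Integrable.mono' ((hu_sq.add hu'_sq).div_const 2)
      ((hW_cont.mul (hu_cont.mul hcont)).aestronglyMeasurable)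
      (Eventually.of_forall fun y => ?_)
    have h1 := hWpos y
    have h2 := hWle y
    rw [Real.norm_eq_abs, abs_mul, abs_of_pos h1, abs_mul]
    simp only [Pi.add_apply]
    nlinarith [sq_nonneg (|u y| - |u' y|), sq_abs (u y), sq_abs (u' y),
      abs_nonneg (u y), abs_nonneg (u' y), mul_nonneg (abs_nonneg (u y)) (abs_nonneg (u' y))]
  -- the integrand
  set F : ℝ → ℝ := fun y => (1 / (2 * α)) * Real.exp (-|x - y| / α) *
      ((α ^ 2 / 2) * (u' y) ^ 2 + (u y + k) ^ 2) with hFdef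
  have hF_int : Integrable F := by
    have : F = fun y => (1/(2*α)) * ((α^2/2) * (W y * u' y ^2) + ((W y * u y ^2)
        + (2*k) * (W y * u y) + k^2 * W y)) := by
      funext y; simp only [hFdef, hWdef]; ring
    rw [this]
    exact (((hWu'2.const_mul _).add (((hWu2.add (hWu.const_mul _))).add
      (hW.const_mul _))).const_mul _)
  -- auxiliary functions for FTC on half-lines
  set f : ℝ → ℝ := fun y => u y + k with hfdef
  set G₁ : ℝ → ℝ := fun y => (1/4) * Real.exp ((y - x)/α) * f y ^ 2 with hG1
  set g₁ : ℝ → ℝ := fun y => (1/4) * Real.exp ((y - x)/α) *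
      ((1/α) * f y ^ 2 + 2 * f y * u' y) with hg1
  set G₂ : ℝ → ℝ := fun y => -((1/4) * Real.exp ((x - y)/α) * f y ^ 2) with hG2
  set g₂ : ℝ → ℝ := fun y => (1/4) * Real.exp ((x - y)/α) *
      ((1/α) * f y ^ 2 - 2 * f y * u' y) with hg2
  have hf2d : ∀ y, HasDerivAt (fun y => f y ^ 2) (2 * f y * u' y) y := by
    intro y
    have := ((hderiv y).add_const k).fun_pow 2
    simpa [hfdef, mul_comm] using this
  have hG1deriv : ∀ y, HasDerivAt G₁ (g₁ y) y := by
    intro y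
    have he : HasDerivAt (fun y : ℝ => Real.exp ((y - x)/α))
        (Real.exp ((y - x)/α) * (1/α)) y := by
      have h0 : HasDerivAt (fun y : ℝ => (y - x)/α) (1/α) y :=
        ((hasDerivAt_id y).sub_const x).div_const α
      simpa [mul_comm] using h0.exp
    have := (he.fun_mul (hf2d y)).const_mul (1/4 : ℝ)
    convert this using 1
    all_goals first
      | (funext z; simp only [hG1]; ring)
      | (simp only [hg1]; ring)
      | rfl
  have hG2deriv : ∀ y, HasDerivAt G₂ (g₂ y) y := by
    intro y
    have he : HasDerivAt (fun y : ℝ => Real.exp ((x - y)/α))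
        (Real.exp ((x - y)/α) * (-(1/α))) y := by
      have h0 : HasDerivAt (fun y : ℝ => (x - y)/α) (-1/α) y :=
        ((hasDerivAt_id y).const_sub x).div_const α
      have := h0.exp
      convert this using 1
      ring
    have := ((he.fun_mul (hf2d y)).const_mul (1/4 : ℝ)).fun_neg
    convert this using 1
    all_goals first
      | (funext z; simp only [hG2]; ring)
      | (simp only [hg2]; ring)
      | rfl
  -- integrability on half lines via W-domination
  have hg1_int : IntegrableOn g₁ (Iic x) := by
    have hglob : Integrable (fun y => (1/4) * (W y *
        ((1/α) * f y ^ 2 + 2 * f y * u' y))) := by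
      have hh : (fun y => (1/4) * (W y * ((1/α) * f y ^ 2 + 2 * f y * u' y)))
          = fun y => (1/4) * (((1/α) * (W y * u y ^ 2) + (2*k/α) * (W y * u y)
              + k^2/α * W y) + (2 * (W y * (u y * u' y)) + (2*k) * (W y * u' y))) := by
        funext y; simp only [hfdef]; ring
      rw [hh]
      exact ((((hWu2.const_mul _).add (hWu.const_mul _)).add (hW.const_mul _)).add
        ((hWuu'.const_mul _).add (hWu'.const_mul _))).const_mul _
    refine hglob.integrableOn.congr_fun (fun y hy => ?_) measurableSet_Iic
    have hxy : (0:ℝ) ≤ x - y := by simpa using sub_nonneg.mpr hy.out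
    simp only [hg1, hWdef]
    rw [show -|x - y| / α = (y - x)/α by rw [abs_of_nonneg hxy]; ring]
    ring
  have hg2_int : IntegrableOn g₂ (Ioi x) := by
    have hglob : Integrable (fun y => (1/4) * (W y *
        ((1/α) * f y ^ 2 - 2 * f y * u' y))) := by
      have hh : (fun y => (1/4) * (W y * ((1/α) * f y ^ 2 - 2 * f y * u' y)))
          = fun y => (1/4) * (((1/α) * (W y * u y ^ 2) + (2*k/α) * (W y * u y)
              + k^2/α * W y) - (2 * (W y * (u y * u' y)) + (2*k) * (W y * u' y))) := by
        funext y; simp only [hfdef]; ring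
      rw [hh]
      exact ((((hWu2.const_mul _).add (hWu.const_mul _)).add (hW.const_mul _)).sub
        ((hWuu'.const_mul _).add (hWu'.const_mul _))).const_mul _
    refine hglob.integrableOn.congr_fun (fun y hy => ?_) measurableSet_Ioi
    have hxy : x - y ≤ 0 := by simpa using sub_nonpos.mpr (le_of_lt hy.out)
    simp only [hg2, hWdef]
    rw [show -|x - y| / α = (x - y)/α by rw [abs_of_nonpos hxy]; ring]
    ring
  -- limits at infinity
  have hflim_bot : Tendsto (fun y => f y ^ 2) atBot (nhds (k ^ 2)) := by
    have := ((hbot.add_const k).pow 2)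
    simpa using this
  have hflim_top : Tendsto (fun y => f y ^ 2) atTop (nhds (k ^ 2)) := by
    have := ((htop.add_const k).pow 2)
    simpa using this
  have hElim_bot : Tendsto (fun y : ℝ => Real.exp ((y - x)/α)) atBot (nhds 0) := by
    apply Real.tendsto_exp_atBot.comp
    apply Tendsto.atBot_div_const hα
    simpa [sub_eq_add_neg] using tendsto_atBot_add_const_right atBot (-x) tendsto_id
  have hElim_top : Tendsto (fun y : ℝ => Real.exp ((x - y)/α)) atTop (nhds 0) := by
    apply Real.tendsto_exp_atBot.comp
    apply Tendsto.atBot_div_const hα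
    exact (tendsto_atBot_add_const_right atTop x tendsto_neg_atTop_atBot).congr
      (fun y => by ring)
  have hlim1 : Tendsto G₁ atBot (nhds 0) := by
    have := (hElim_bot.mul hflim_bot).const_mul (1/4 : ℝ)
    simpa [hG1, mul_assoc] using this
  have hlim2 : Tendsto G₂ atTop (nhds 0) := by
    have := ((hElim_top.mul hflim_top).const_mul (1/4 : ℝ)).neg
    simpa [hG2, mul_assoc] using this
  -- FTC
  have hI1 : ∫ y in Iic x, g₁ y = (u x + k) ^ 2 / 4 := by
    rw [integral_Iic_of_hasDerivAt_of_tendsto' (fun y _ => hG1deriv y) hg1_int hlim1]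
    simp [hG1, hfdef]
    ring
  have hI2 : ∫ y in Ioi x, g₂ y = (u x + k) ^ 2 / 4 := by
    rw [integral_Ioi_of_hasDerivAt_of_tendsto' (fun y _ => hG2deriv y) hg2_int hlim2]
    simp [hG2, hfdef]
    ring
  -- pointwise comparison
  have hle1 : ∀ y ∈ Iic x, g₁ y ≤ F y := by
    intro y hy
    have hxy : (0:ℝ) ≤ x - y := sub_nonneg.mpr hy.out
    have hEW : Real.exp ((y - x)/α) = W y := by
      simp only [hWdef]
      rw [show -|x - y| / α = (y - x)/α by rw [abs_of_nonneg hxy]; ring]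
    have hid : (1/(2*α)) * ((α^2/2) * (u' y)^2 + f y ^ 2)
        - (1/4) * ((1/α) * f y ^ 2 + 2 * f y * u' y)
        = (1/(4*α)) * (α * u' y - f y)^2 := by
      field_simp
      ring
    have hnn : (0:ℝ) ≤ (1/(4*α)) * (α * u' y - f y)^2 := by positivity
    have hcore : (1/4) * ((1/α) * f y ^ 2 + 2 * f y * u' y)
        ≤ (1/(2*α)) * ((α^2/2) * (u' y)^2 + f y ^ 2) := by linarith
    have e1 : g₁ y = W y * ((1/4) * ((1/α) * f y ^ 2 + 2 * f y * u' y)) := by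
      simp only [hg1]; rw [hEW]; ring
    have e2 : F y = W y * ((1/(2*α)) * ((α^2/2) * (u' y)^2 + f y ^ 2)) := by
      simp only [hFdef, hWdef, hfdef]; ring
    rw [e1, e2]
    exact mul_le_mul_of_nonneg_left hcore (hWpos y).le
  have hle2 : ∀ y ∈ Ioi x, g₂ y ≤ F y := by
    intro y hy
    have hxy : x - y ≤ 0 := sub_nonpos.mpr (le_of_lt hy.out)
    have hEW : Real.exp ((x - y)/α) = W y := by
      simp only [hWdef]
      rw [show -|x - y| / α = (x - y)/α by rw [abs_of_nonpos hxy]; ring]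
    have hid : (1/(2*α)) * ((α^2/2) * (u' y)^2 + f y ^ 2)
        - (1/4) * ((1/α) * f y ^ 2 - 2 * f y * u' y)
        = (1/(4*α)) * (α * u' y + f y)^2 := by
      field_simp
      ring
    have hnn : (0:ℝ) ≤ (1/(4*α)) * (α * u' y + f y)^2 := by positivity
    have hcore : (1/4) * ((1/α) * f y ^ 2 - 2 * f y * u' y)
        ≤ (1/(2*α)) * ((α^2/2) * (u' y)^2 + f y ^ 2) := by linarith
    have e1 : g₂ y = W y * ((1/4) * ((1/α) * f y ^ 2 - 2 * f y * u' y)) := by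
      simp only [hg2]; rw [hEW]; ring
    have e2 : F y = W y * ((1/(2*α)) * ((α^2/2) * (u' y)^2 + f y ^ 2)) := by
      simp only [hFdef, hWdef, hfdef]; ring
    rw [e1, e2]
    exact mul_le_mul_of_nonneg_left hcore (hWpos y).le
  -- assemble
  have m1 : ∫ y in Iic x, g₁ y ≤ ∫ y in Iic x, F y :=
    setIntegral_mono_on hg1_int hF_int.integrableOn measurableSet_Iic hle1
  have m2 : ∫ y in Ioi x, g₂ y ≤ ∫ y in Ioi x, F y :=
    setIntegral_mono_on hg2_int hF_int.integrableOn measurableSet_Ioi hle2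
  have hsplit : (∫ y in Iic x, F y) + (∫ y in Ioi x, F y) = ∫ y, F y :=
    intervalIntegral.integral_Iic_add_Ioi hF_int.integrableOn hF_int.integrableOn
  rw [ge_iff_le, ← hsplit]
  rw [hI1] at m1
  rw [hI2] at m2
  linarith
end

section
/- Let α > 0 and k ∈ ℝ. Let u : ℝ → ℝ be continuously differentiable with u and u′ square-integrable on ℝ and u(y) → 0 as |y| → ∞. Then for every x ∈ ℝ, both one-sided bounds hold: (1/(2α))∫_{−∞}^{x} e^{(y−x)/α} ((α²/2)u′(y)² + (u(y)+k)²) dy ≥ (u(x)+k)²/4 and (1/(2α))∫_{x}^{∞} e^{(x−y)/α} ((α²/2)u′(y)² + (u(y)+k)²) dy ≥ (u(x)+k)²/4. -/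
set_option maxHeartbeats 1000000

open MeasureTheory Filter

private lemma dgh_ptwise (α e w d : ℝ) (hα : 0 < α) (he : 0 ≤ e) :
    |e * ((1 / α) * w ^ 2 + 2 * w * d)| ≤ (2 / α) * (e * w ^ 2) + α * (e * d ^ 2) := by
  have hne : α ≠ 0 := ne_of_gt hα
  rw [abs_le]
  constructor
  · have h1 : 0 ≤ e * (w + α * d) ^ 2 := mul_nonneg he (sq_nonneg _)
    rw [neg_le, ← sub_nonneg]
    have : (2 / α) * (e * w ^ 2) + α * (e * d ^ 2) - -(e * ((1 / α) * w ^ 2 + 2 * w * d))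
        = (1 / α) * (e * (w + α * d) ^ 2) + (2 / α) * (e * w ^ 2) := by
      field_simp
      ring
    rw [this]
    positivity
  · have h1 : 0 ≤ e * (w - α * d) ^ 2 := mul_nonneg he (sq_nonneg _)
    rw [← sub_nonneg]
    have : (2 / α) * (e * w ^ 2) + α * (e * d ^ 2) - e * ((1 / α) * w ^ 2 + 2 * w * d)
        = (1 / α) * (e * (w - α * d) ^ 2) := by
      field_simp
      ring
    rw [this]
    positivity

private lemma dgh_key (α k x : ℝ) (hα : 0 < α) (u u' : ℝ → ℝ)
    (hderiv : ∀ x, HasDerivAt u (u' x) x)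
    (hcont : Continuous u')
    (hu_sq : Integrable (fun y => (u y) ^ 2))
    (hu'_sq : Integrable (fun y => (u' y) ^ 2))
    (hbot : Tendsto u atBot (nhds 0)) :
    (1 / (2 * α)) * ∫ y in Set.Iic x,
        Real.exp ((y - x) / α) *
          ((α ^ 2 / 2) * (u' y) ^ 2 + (u y + k) ^ 2)
      ≥ (u x + k) ^ 2 / 4 := by
  have hne : α ≠ 0 := ne_of_gt hα
  have hu_cont : Continuous u := by
    rw [continuous_iff_continuousAt]; exact fun y => (hderiv y).continuousAt
  set e : ℝ → ℝ := fun y => Real.exp ((y - x) / α) with he_def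
  have he_cont : Continuous e :=
    Real.continuous_exp.comp ((continuous_id.sub continuous_const).div_const α)
  have he_pos : ∀ y, 0 < e y := fun y => Real.exp_pos _
  have he_le1 : ∀ y ∈ Set.Iic x, e y ≤ 1 := by
    intro y hy
    have h0 : (y - x) / α ≤ 0 :=
      div_nonpos_of_nonpos_of_nonneg (by simpa [sub_nonpos] using hy) hα.le
    calc e y = Real.exp ((y - x) / α) := rfl
      _ ≤ Real.exp 0 := Real.exp_le_exp.2 h0
      _ = 1 := Real.exp_zero
  -- integrability of e on Iic x
  have he_int : IntegrableOn e (Set.Iic x) := by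
    have hb : (0:ℝ) < 1 / α := by positivity
    have h1 : IntegrableOn (fun y => Real.exp (-(1 / α) * y)) (Set.Ioi (-x)) :=
      exp_neg_integrableOn_Ioi _ hb
    have h1' : IntegrableOn (fun y => Real.exp (-(1 / α) * y)) (Set.Ici (-x)) := by
      rwa [integrableOn_Ici_iff_integrableOn_Ioi]
    have A : MeasurableEmbedding (fun y : ℝ => -y) :=
      (Homeomorph.neg ℝ).isClosedEmbedding.measurableEmbedding
    have hmap : (volume : Measure ℝ).restrict (Set.Iic x)
        = Measure.map (fun y : ℝ => -y) ((volume : Measure ℝ).restrict (Set.Ici (-x))) := by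
      conv_lhs => rw [← Measure.map_neg_eq_self (volume : Measure ℝ)]
      rw [Measure.restrict_map A.measurable measurableSet_Iic]
      congr 1
      ext y
      simp [neg_le]
    rw [IntegrableOn, hmap, A.integrable_map_iff]
    have heq : (e ∘ fun y : ℝ => -y)
        = fun y => Real.exp (-(1 / α) * y) * Real.exp (-x / α) := by
      funext y
      simp only [Function.comp, he_def, ← Real.exp_add]
      congr 1
      field_simp
      ring
    rw [heq]
    exact h1'.mul_const _
  -- integrability of the main pieces
  have hmeasA : AEStronglyMeasurable (fun y => e y * (u y + k) ^ 2)
      ((volume : Measure ℝ).restrict (Set.Iic x)) :=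
    (he_cont.mul ((hu_cont.add continuous_const).pow 2)).aestronglyMeasurable
  have hgA : IntegrableOn (fun y => 2 * (u y) ^ 2 + (2 * k ^ 2) * e y) (Set.Iic x) :=
    (hu_sq.restrict.const_mul 2).add (he_int.const_mul (2 * k ^ 2))
  have hA : IntegrableOn (fun y => e y * (u y + k) ^ 2) (Set.Iic x) := by
    refine hgA.mono' hmeasA ?_
    refine (ae_restrict_iff' measurableSet_Iic).2 (Filter.Eventually.of_forall fun y hy => ?_)
    have h1 := he_pos y
    have h2 := he_le1 y hy
    rw [Real.norm_eq_abs, abs_of_nonneg (mul_nonneg h1.le (sq_nonneg _))]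
    nlinarith [mul_nonneg h1.le (sq_nonneg (u y - k)), mul_nonneg (sq_nonneg (u y)) (sub_nonneg.2 h2)]
  have hgB : IntegrableOn (fun y => (u' y) ^ 2) (Set.Iic x) := hu'_sq.restrict
  have hB : IntegrableOn (fun y => e y * (u' y) ^ 2) (Set.Iic x) := by
    refine hgB.mono' ((he_cont.mul (hcont.pow 2)).aestronglyMeasurable) ?_
    refine (ae_restrict_iff' measurableSet_Iic).2 (Filter.Eventually.of_forall fun y hy => ?_)
    have h1 := he_pos y
    have h2 := he_le1 y hy
    rw [Real.norm_eq_abs, abs_of_nonneg (mul_nonneg h1.le (sq_nonneg _))]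
    nlinarith [sq_nonneg (u' y)]
  -- the antiderivative
  set F : ℝ → ℝ := fun y => e y * (u y + k) ^ 2 with hF_def
  set F' : ℝ → ℝ := fun y => e y * ((1 / α) * (u y + k) ^ 2 + 2 * (u y + k) * u' y) with hF'_def
  have hF'deriv : ∀ y, HasDerivAt F (F' y) y := by
    intro y
    have hde : HasDerivAt e (e y * (1 / α)) y := by
      exact (((hasDerivAt_id y).sub_const x).div_const α).exp
    have hdw : HasDerivAt (fun z => (u z + k) ^ 2) (2 * (u y + k) * u' y) y := by
      have := ((hderiv y).add_const k).pow 2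
      simpa [Pi.pow_def] using this
    have : HasDerivAt (fun z => e z * (u z + k) ^ 2) _ y := hde.mul hdw
    convert this using 1
    simp only [hF'_def]
    ring
  have hgC : IntegrableOn
      (fun y => (2 / α) * (e y * (u y + k) ^ 2) + α * (e y * (u' y) ^ 2)) (Set.Iic x) :=
    (hA.const_mul (2 / α)).add (hB.const_mul α)
  have hmeasC : AEStronglyMeasurable F' ((volume : Measure ℝ).restrict (Set.Iic x)) := by
    have : Continuous F' := by
      apply he_cont.mul
      exact (continuous_const.mul ((hu_cont.add continuous_const).pow 2)).add
        ((continuous_const.mul (hu_cont.add continuous_const)).mul hcont)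
    exact this.aestronglyMeasurable
  have hF'int : IntegrableOn F' (Set.Iic x) := by
    refine hgC.mono' hmeasC ?_
    refine Filter.Eventually.of_forall fun y => ?_
    rw [Real.norm_eq_abs]
    exact dgh_ptwise α (e y) (u y + k) (u' y) hα (he_pos y).le
  have hF0 : Tendsto F atBot (nhds 0) := by
    have h1 : Tendsto (fun y => (y - x) / α) atBot atBot := by
      apply Tendsto.atBot_div_const hα
      simpa [sub_eq_add_neg] using tendsto_atBot_add_const_right atBot (-x) tendsto_id
    have h2 : Tendsto e atBot (nhds 0) := Real.tendsto_exp_atBot.comp h1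
    have h3 : Tendsto (fun y => (u y + k) ^ 2) atBot (nhds ((0 + k) ^ 2)) :=
      ((hbot.add_const k).pow 2)
    have := h2.mul h3
    simpa using this
  have hFTC : ∫ y in Set.Iic x, F' y = (u x + k) ^ 2 := by
    rw [integral_Iic_of_hasDerivAt_of_tendsto' (fun y _ => hF'deriv y) hF'int hF0]
    simp [hF_def, he_def]
  -- compare with the target integrand
  have hI : IntegrableOn
      (fun y => e y * ((α ^ 2 / 2) * (u' y) ^ 2 + (u y + k) ^ 2)) (Set.Iic x) := by
    exact MeasureTheory.IntegrableOn.congr_fun ((hB.const_mul (α ^ 2 / 2)).add hA)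
      (fun y _ => by simp only [hF_def, Pi.add_apply]; ring) measurableSet_Iic
  have hle : ∫ y in Set.Iic x, F' y
      ≤ ∫ y in Set.Iic x, (2 / α) * (e y * ((α ^ 2 / 2) * (u' y) ^ 2 + (u y + k) ^ 2)) := by
    refine setIntegral_mono_on hF'int (hI.const_mul _) measurableSet_Iic fun y _ => ?_
    have h := dgh_ptwise α (e y) (u y + k) (u' y) hα (he_pos y).le
    have h2 := le_of_abs_le h
    calc F' y ≤ (2 / α) * (e y * (u y + k) ^ 2) + α * (e y * (u' y) ^ 2) := h2
      _ = (2 / α) * (e y * ((α ^ 2 / 2) * (u' y) ^ 2 + (u y + k) ^ 2)) := by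
          field_simp
          ring
  rw [MeasureTheory.integral_const_mul] at hle
  rw [hFTC] at hle
  rw [ge_iff_le, div_le_iff₀ (by norm_num : (0:ℝ) < 4)]
  calc (u x + k) ^ 2
      ≤ 2 / α * ∫ y in Set.Iic x, e y * ((α ^ 2 / 2) * (u' y) ^ 2 + (u y + k) ^ 2) := hle
    _ = 1 / (2 * α) * (∫ y in Set.Iic x, e y * ((α ^ 2 / 2) * (u' y) ^ 2 + (u y + k) ^ 2)) * 4 := by
        field_simp
        ring

/-- The two one-sided halves of Lemma 3.2:
`(p·1_{(0,∞)}) ∗ ((α²/2)uₓ² + (u+k)²) ≥ (u+k)²/4` and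
`(p·1_{(-∞,0)}) ∗ ((α²/2)uₓ² + (u+k)²) ≥ (u+k)²/4`. -/
theorem dgh_convolution_estimate_one_sided
    (α k : ℝ) (hα : 0 < α)
    (u u' : ℝ → ℝ)
    (hderiv : ∀ x, HasDerivAt u (u' x) x)
    (hcont : Continuous u')
    (hu_sq : Integrable (fun y => (u y) ^ 2))
    (hu'_sq : Integrable (fun y => (u' y) ^ 2))
    (hbot : Tendsto u atBot (nhds 0))
    (htop : Tendsto u atTop (nhds 0)) :
    ∀ x : ℝ,
      ((1 / (2 * α)) * ∫ y in Set.Iic x,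
          Real.exp ((y - x) / α) *
            ((α ^ 2 / 2) * (u' y) ^ 2 + (u y + k) ^ 2)
        ≥ (u x + k) ^ 2 / 4) ∧
      ((1 / (2 * α)) * ∫ y in Set.Ici x,
          Real.exp ((x - y) / α) *
            ((α ^ 2 / 2) * (u' y) ^ 2 + (u y + k) ^ 2)
        ≥ (u x + k) ^ 2 / 4) := by
  intro x
  constructor
  · exact dgh_key α k x hα u u' hderiv hcont hu_sq hu'_sq hbot
  · -- reflection
    set v : ℝ → ℝ := fun y => u (-y) with hv_def
    set v' : ℝ → ℝ := fun y => -u' (-y) with hv'_def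
    have hderiv_v : ∀ y, HasDerivAt v (v' y) y := by
      intro y
      have := (hderiv (-y)).comp y (hasDerivAt_neg y)
      simpa [hv_def, hv'_def, Function.comp_def] using this
    have hcont_v' : Continuous v' := (hcont.comp continuous_neg).neg
    have hv_sq : Integrable (fun y => (v y) ^ 2) := by
      have := hu_sq.comp_neg
      simpa [hv_def] using this
    have hv'_sq : Integrable (fun y => (v' y) ^ 2) := by
      have := hu'_sq.comp_neg
      simpa [hv'_def, neg_sq] using this
    have hbot_v : Tendsto v atBot (nhds 0) := htop.comp tendsto_neg_atBot_atTop
    have hkey := dgh_key α k (-x) hα v v' hderiv_v hcont_v' hv_sq hv'_sq hbot_v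
    set f : ℝ → ℝ := fun z =>
      Real.exp ((z - -x) / α) * ((α ^ 2 / 2) * (v' z) ^ 2 + (v z + k) ^ 2) with hf_def
    have heq : (∫ y in Set.Ici x,
          Real.exp ((x - y) / α) * ((α ^ 2 / 2) * (u' y) ^ 2 + (u y + k) ^ 2))
        = ∫ y in Set.Iic (-x), f y := by
      calc (∫ y in Set.Ici x,
              Real.exp ((x - y) / α) * ((α ^ 2 / 2) * (u' y) ^ 2 + (u y + k) ^ 2))
          = ∫ y in Set.Ioi x,
              Real.exp ((x - y) / α) * ((α ^ 2 / 2) * (u' y) ^ 2 + (u y + k) ^ 2) :=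
            MeasureTheory.integral_Ici_eq_integral_Ioi
        _ = ∫ y in Set.Ioi x, f (-y) := by
            refine MeasureTheory.setIntegral_congr_fun measurableSet_Ioi fun y _ => ?_
            simp only [hf_def, hv_def, hv'_def, neg_neg]
            rw [show -y - -x = x - y by ring]
            ring
        _ = ∫ y in Set.Iic (-x), f y := integral_comp_neg_Ioi x f
    rw [heq]
    simpa [hv_def, hf_def] using hkey
end

section
/- Let α > 0, k ∈ ℝ, c ∈ ℝ, y₀ ∈ ℝ, and define u : ℝ → ℝ by u(x) = c e^{−|x−y₀|/α} − k. Then for every x ≤ y₀ (where u is differentiable with u′(y) = (c/α)e^{(y−y₀)/α} for y < y₀), equality holds: (1/α)∫_{−∞}^{x} e^{(y−x)/α} ((α²/2)u′(y)² + u(y)² + 2k u(y)) dy = (u(x)+k)²/2 − k². -/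
open MeasureTheory Filter intervalIntegral

lemma exp_mul_integrableOn_Iic {b : ℝ} (hb : 0 < b) (x : ℝ) :
    IntegrableOn (fun y => Real.exp (b * y)) (Set.Iic x) := by
  have hcont : Continuous fun y : ℝ => Real.exp (b * y) :=
    Real.continuous_exp.comp (continuous_const.mul continuous_id)
  refine integrableOn_Iic_of_intervalIntegral_norm_bounded
    (Real.exp (b * x) / b) x (fun a => hcont.integrableOn_Ioc) tendsto_id
    (Filter.Eventually.of_forall fun a => ?_)
  simp_rw [Real.norm_of_nonneg (Real.exp_pos _).le, id,
    integral_comp_mul_left Real.exp hb.ne',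
    integral_exp, smul_eq_mul]
  have := (Real.exp_pos (b*a)).le
  rw [div_eq_inv_mul]
  nlinarith [inv_pos.mpr hb]

lemma exp_mul_integral_Iic {b : ℝ} (hb : 0 < b) (x : ℝ) :
    ∫ y in Set.Iic x, Real.exp (b * y) = Real.exp (b * x) / b := by
  refine tendsto_nhds_unique
    (MeasureTheory.intervalIntegral_tendsto_integral_Iic _
      (exp_mul_integrableOn_Iic hb x) tendsto_id) ?_
  have h1 : ∀ a : ℝ, ∫ y in a..x, Real.exp (b * y)
      = b⁻¹ * (Real.exp (b*x) - Real.exp (b*a)) := by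
    intro a
    rw [integral_comp_mul_left Real.exp hb.ne', integral_exp, smul_eq_mul]
  simp_rw [id, h1]
  have h2 : Filter.Tendsto (fun a : ℝ => Real.exp (b*a)) atBot (nhds 0) :=
    Real.tendsto_exp_atBot.comp (tendsto_id.const_mul_atBot hb)
  have := ((tendsto_const_nhds (x := Real.exp (b*x))).sub h2).const_mul b⁻¹
  simpa [div_eq_inv_mul] using this


/-- Sharpness of the convolution inequality of Lemma 3.1: for the peakon-type
profile `u(x) = c e^{-|x-y₀|/α} - k` (whose derivative for `y < y₀` is
`(c/α) e^{(y-y₀)/α}`), equality holds for every `x ≤ y₀`. -/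
theorem dgh_convolution_estimate_sharp
    (α k c y₀ : ℝ) (hα : 0 < α)
    (u : ℝ → ℝ)
    (hu : ∀ x, u x = c * Real.exp (-|x - y₀| / α) - k) :
    ∀ x ≤ y₀,
      (1 / α) * ∫ y in Set.Iic x,
          Real.exp ((y - x) / α) *
            ((α ^ 2 / 2) * ((c / α) * Real.exp ((y - y₀) / α)) ^ 2
              + (u y) ^ 2 + 2 * k * u y)
        = (u x + k) ^ 2 / 2 - k ^ 2 := by
  intro x hx
  have h3α : (0:ℝ) < 3 / α := by positivity
  have h1α : (0:ℝ) < 1 / α := by positivity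
  set A : ℝ := 3 * c ^ 2 / 2 * Real.exp ((-x - 2 * y₀) / α) with hAdef
  set B : ℝ := -(k ^ 2 * Real.exp (-x / α)) with hBdef
  have hcong : ∫ y in Set.Iic x,
      Real.exp ((y - x) / α) *
        ((α ^ 2 / 2) * ((c / α) * Real.exp ((y - y₀) / α)) ^ 2
          + (u y) ^ 2 + 2 * k * u y)
      = ∫ y in Set.Iic x, (A * Real.exp ((3 / α) * y) + B * Real.exp ((1 / α) * y)) := by
    refine setIntegral_congr_fun measurableSet_Iic fun y hy => ?_
    have hy' : y ≤ x := hy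
    rw [hu y, abs_of_nonpos (by linarith : y - y₀ ≤ 0)]
    have e1 : (y - x) / α = y / α - x / α := by ring
    have e2 : (y - y₀) / α = y / α - y₀ / α := by ring
    have e3 : (-x - 2 * y₀) / α = -(x / α) - (y₀ / α + y₀ / α) := by ring
    have e4 : (3 / α) * y = y / α + (y / α + y / α) := by ring
    have e5 : (1 / α) * y = y / α := by ring
    have e6 : -x / α = -(x / α) := by ring
    have e7 : - -(y - y₀) / α = y / α - y₀ / α := by ring
    rw [hAdef, hBdef, e1, e2, e3, e4, e5, e6, e7]
    simp only [Real.exp_sub, Real.exp_add, Real.exp_neg]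
    field_simp
    ring
  rw [hcong, integral_add ((exp_mul_integrableOn_Iic h3α x).const_mul A)
      ((exp_mul_integrableOn_Iic h1α x).const_mul B),
    MeasureTheory.integral_const_mul, MeasureTheory.integral_const_mul,
    exp_mul_integral_Iic h3α x, exp_mul_integral_Iic h1α x,
    hu x, abs_of_nonpos (by linarith : x - y₀ ≤ 0)]
  have e1 : (-x - 2 * y₀) / α = -(x / α) - (y₀ / α + y₀ / α) := by ring
  have e2 : (3 / α) * x = x / α + (x / α + x / α) := by ring
  have e3 : (1 / α) * x = x / α := by ring
  have e4 : -x / α = -(x / α) := by ring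
  have e5 : - -(x - y₀) / α = x / α - y₀ / α := by ring
  rw [hAdef, hBdef, e1, e2, e3, e4, e5]
  simp only [Real.exp_sub, Real.exp_add, Real.exp_neg]
  have hαne : α ≠ 0 := hα.ne'
  field_simp
  ring
end

section
/- Let α > 0, c ∈ ℝ, y₀ ∈ ℝ, and define u : ℝ → ℝ by u(x) = c e^{−|x−y₀|/α}, with almost-everywhere derivative g(x) = −(c/α) sign(x−y₀) e^{−|x−y₀|/α}. Then ∫_ℝ u(x)² dx = αc², ∫_ℝ α² g(x)² dx = αc², and sup_{x∈ℝ} |u(x)| = |c| = (1/√(2α)) (∫_ℝ (u² + α²g²) dx)^{1/2}; i.e., equality is attained in the Sobolev embedding inequality ‖u‖_{L^∞} ≤ (1/√(2α))‖u‖_{H¹_α}. -/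
open MeasureTheory Filter

lemma exp_abs_integral {b : ℝ} (hb : 0 < b) :
    ∫ x : ℝ, Real.exp (-(b * |x|)) = 2 / b := by
  have h1 : ∫ x : ℝ, Real.exp (-(b * |x|)) =
      2 * ∫ x in Set.Ioi (0 : ℝ), Real.exp (-(b * x)) :=
    integral_comp_abs (f := fun x => Real.exp (-(b * x)))
  have h2 := MeasureTheory.integral_comp_mul_left_Ioi (fun x => Real.exp (-x)) 0 hb
  simp only [mul_zero, integral_exp_neg_Ioi, neg_zero, Real.exp_zero, smul_eq_mul,
    mul_one] at h2
  rw [h1, h2]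
  rw [eq_div_iff hb.ne']
  field_simp

lemma exp_abs_integral_shift {b : ℝ} (y₀ : ℝ) (hb : 0 < b) :
    ∫ x : ℝ, Real.exp (-(b * |x - y₀|)) = 2 / b := by
  rw [← exp_abs_integral hb]
  exact integral_sub_right_eq_self (fun x => Real.exp (-(b * |x|))) y₀

/-- Equality in the Sobolev embedding `‖u‖_{L^∞} ≤ (1/√(2α))‖u‖_{H¹_α}` is
attained for the peakon profile `u(x) = c e^{-|x-y₀|/α}`, with weak derivative
`g(x) = -(c/α) sign(x-y₀) e^{-|x-y₀|/α}`. -/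
theorem dgh_sobolev_embedding_sharp
    (α c y₀ : ℝ) (hα : 0 < α)
    (u g : ℝ → ℝ)
    (hu : ∀ x, u x = c * Real.exp (-|x - y₀| / α))
    (hg : ∀ x, g x = -(c / α) * Real.sign (x - y₀) * Real.exp (-|x - y₀| / α)) :
    (∫ x : ℝ, (u x) ^ 2) = α * c ^ 2 ∧
    (∫ x : ℝ, α ^ 2 * (g x) ^ 2) = α * c ^ 2 ∧
    (⨆ x : ℝ, |u x|) = |c| ∧
    |c| = (1 / Real.sqrt (2 * α)) *
        Real.sqrt (∫ x : ℝ, ((u x) ^ 2 + α ^ 2 * (g x) ^ 2)) := by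
  have hb : 0 < 2 / α := by positivity
  -- first integral
  have hsq : ∀ x : ℝ, (u x) ^ 2 = c ^ 2 * Real.exp (-(2 / α * |x - y₀|)) := by
    intro x
    rw [hu x, mul_pow, ← Real.exp_nat_mul]
    congr 2
    push_cast
    field_simp
  have h1 : (∫ x : ℝ, (u x) ^ 2) = α * c ^ 2 := by
    simp_rw [hsq]
    rw [MeasureTheory.integral_const_mul _ _, exp_abs_integral_shift y₀ hb]
    field_simp
  -- a.e. equality of the two integrands
  have h0 : ∀ x : ℝ, x ≠ y₀ → α ^ 2 * (g x) ^ 2 = (u x) ^ 2 := by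
    intro x hx
    have hs : Real.sign (x - y₀) ^ 2 = 1 := by
      rcases (sub_ne_zero.2 hx).lt_or_gt with h | h
      · rw [Real.sign_of_neg h]; norm_num
      · rw [Real.sign_of_pos h]; norm_num
    rw [hg x, hu x]
    have : (-(c / α) * Real.sign (x - y₀) * Real.exp (-|x - y₀| / α)) ^ 2 =
        (c / α) ^ 2 * Real.sign (x - y₀) ^ 2 * Real.exp (-|x - y₀| / α) ^ 2 := by ring
    rw [this, hs]
    field_simp
  have hae : (fun x => α ^ 2 * (g x) ^ 2) =ᵐ[volume] fun x => (u x) ^ 2 := by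
    filter_upwards [compl_mem_ae_iff.mpr (measure_singleton y₀)] with x hx
    exact h0 x hx
  have h2 : (∫ x : ℝ, α ^ 2 * (g x) ^ 2) = α * c ^ 2 := by
    rw [integral_congr_ae hae, h1]
  -- sup
  have habs : ∀ x : ℝ, |u x| = |c| * Real.exp (-|x - y₀| / α) := by
    intro x
    rw [hu x, abs_mul, abs_of_pos (Real.exp_pos _)]
  have hub : ∀ x : ℝ, |u x| ≤ |c| := by
    intro x
    rw [habs x]
    calc |c| * Real.exp (-|x - y₀| / α) ≤ |c| * 1 := by
          apply mul_le_mul_of_nonneg_left _ (abs_nonneg c)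
          rw [Real.exp_le_one_iff]
          apply div_nonpos_of_nonpos_of_nonneg (neg_nonpos.2 (abs_nonneg _)) hα.le
      _ = |c| := mul_one _
  have h3 : (⨆ x : ℝ, |u x|) = |c| := by
    apply le_antisymm (ciSup_le hub)
    have hy : |u y₀| = |c| := by
      rw [habs y₀]; simp
    calc |c| = |u y₀| := hy.symm
      _ ≤ ⨆ x : ℝ, |u x| := le_ciSup ⟨|c|, by rintro _ ⟨x, rfl⟩; exact hub x⟩ y₀
  -- last part
  have h4 : (∫ x : ℝ, ((u x) ^ 2 + α ^ 2 * (g x) ^ 2)) = 2 * α * c ^ 2 := by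
    have hae2 : (fun x => (u x) ^ 2 + α ^ 2 * (g x) ^ 2) =ᵐ[volume]
        fun x => 2 * (u x) ^ 2 := by
      filter_upwards [hae] with x hx
      rw [hx]; ring
    rw [integral_congr_ae hae2, MeasureTheory.integral_const_mul _ _, h1]
    ring
  refine ⟨h1, h2, h3, ?_⟩
  rw [h4]
  have h2α : (0 : ℝ) < 2 * α := by positivity
  have : Real.sqrt (2 * α * c ^ 2) = Real.sqrt (2 * α) * |c| := by
    rw [show 2 * α * c ^ 2 = (2 * α) * c ^ 2 by ring, Real.sqrt_mul h2α.le,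
      Real.sqrt_sq_eq_abs]
  rw [this]
  have hs : Real.sqrt (2 * α) ≠ 0 := by positivity
  field_simp
end

section
/- Let α > 0, c₀, γ ∈ ℝ, k = (c₀ + γ/α²)/2, and T ∈ (0, ∞]. Let u : [0,T) × ℝ → ℝ be three times continuously differentiable, set m = u − α²∂ₓ²u, and suppose the momentum form of the DGH equation holds pointwise: ∂ₜm + c₀∂ₓu + u∂ₓm + 2m∂ₓu + γ∂ₓ³u = 0 on [0,T) × ℝ. Let q : [0,T) × ℝ → ℝ be twice continuously differentiable with q(0,x) = x and ∂ₜq(t,x) = u(t,q(t,x)) − γ/α². Then for all (t,x) ∈ [0,T) × ℝ, (m(t,q(t,x)) + c₀/2 + γ/(2α²)) · (∂ₓq(t,x))² = m(0,x) + c₀/2 + γ/(2α²). -/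
open MeasureTheory Filter

open Set

/-- Identify the `x`-partial of a jointly-differentiable function via a full slice. -/
private lemma dgh_slice_x {T : EReal} {W : ℝ × ℝ → ℝ} {S : Set (ℝ × ℝ)}
    (hS : S = {p : ℝ × ℝ | 0 ≤ p.1 ∧ (p.1 : EReal) < T})
    {L : ℝ × ℝ →L[ℝ] ℝ} {s y : ℝ} (hs : 0 ≤ s) (hsT : (s : EReal) < T)
    (hW : HasFDerivWithinAt W L S (s, y)) {d : ℝ}
    (hd : HasDerivAt (fun y' => W (s, y')) d y) : d = L (0, 1) := by
  have hline : HasDerivAt (fun y' : ℝ => ((s, y') : ℝ × ℝ)) ((0 : ℝ), (1 : ℝ)) y :=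
    (hasDerivAt_const y s).prodMk (hasDerivAt_id y)
  have hmap : MapsTo (fun y' : ℝ => ((s, y') : ℝ × ℝ)) univ S := by
    intro y' _; rw [hS]; exact ⟨hs, hsT⟩
  have hcomp := hW.comp_hasDerivWithinAt _ hline.hasDerivWithinAt hmap
  rw [hasDerivWithinAt_univ] at hcomp
  exact hd.unique (by simpa [Function.comp_def] using hcomp)

/-- Identify the `t`-partial of a jointly-differentiable function via a right-slice. -/
private lemma dgh_slice_t {T : EReal} {W : ℝ × ℝ → ℝ} {S : Set (ℝ × ℝ)}
    (hS : S = {p : ℝ × ℝ | 0 ≤ p.1 ∧ (p.1 : EReal) < T})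
    {L : ℝ × ℝ →L[ℝ] ℝ} {s y : ℝ} (hs : 0 ≤ s) (hsT : (s : EReal) < T)
    (hW : HasFDerivWithinAt W L S (s, y)) {d : ℝ}
    (hd : HasDerivAt (fun s' => W (s', y)) d s) : d = L (1, 0) := by
  set A : Set ℝ := {a : ℝ | 0 ≤ a ∧ (a : EReal) < T} with hA
  have hline : HasDerivAt (fun s' : ℝ => ((s', y) : ℝ × ℝ)) ((1 : ℝ), (0 : ℝ)) s :=
    (hasDerivAt_id s).prodMk (hasDerivAt_const s y)
  have hmap : MapsTo (fun s' : ℝ => ((s', y) : ℝ × ℝ)) A S := by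
    intro a ha; rw [hS]; exact ⟨ha.1, ha.2⟩
  have hcomp := hW.comp_hasDerivWithinAt s hline.hasDerivWithinAt hmap
  obtain ⟨r, hsr, hrT⟩ := EReal.lt_iff_exists_real_btwn.mp hsT
  have hsr' : s < r := by exact_mod_cast hsr
  have hsub : Icc s r ⊆ A := by
    intro a ⟨h1, h2⟩
    exact ⟨hs.trans h1, lt_of_le_of_lt (by exact_mod_cast h2) hrT⟩
  have hu : UniqueDiffWithinAt ℝ A s :=
    ((uniqueDiffOn_Icc hsr') s ⟨le_rfl, hsr'.le⟩).mono hsub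
  exact hu.eq_deriv A hd.hasDerivWithinAt (by simpa [Function.comp_def] using hcomp)

/-- Chain rule along a curve `s' ↦ (s', c s')` staying in the strip. -/
private lemma dgh_chain {T : EReal} {S : Set (ℝ × ℝ)}
    (hS : S = {p : ℝ × ℝ | 0 ≤ p.1 ∧ (p.1 : EReal) < T})
    {W Wt Wx : ℝ → ℝ → ℝ}
    (hWd : DifferentiableOn ℝ (fun p : ℝ × ℝ => W p.1 p.2) S)
    (hWt : ∀ s y : ℝ, 0 ≤ s → (s : EReal) < T → HasDerivAt (fun s' => W s' y) (Wt s y) s)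
    (hWx : ∀ s y : ℝ, 0 ≤ s → (s : EReal) < T → HasDerivAt (fun y' => W s y') (Wx s y) y)
    {c : ℝ → ℝ} {v s t : ℝ} (hs : 0 ≤ s) (hst : s ≤ t) (htT : (t : EReal) < T)
    (hc : HasDerivAt c v s) :
    HasDerivWithinAt (fun s' => W s' (c s')) (Wt s (c s) + v * Wx s (c s)) (Icc 0 t) s := by
  have hsT : (s : EReal) < T := lt_of_le_of_lt (by exact_mod_cast hst) htT
  have hmem : (s, c s) ∈ S := by rw [hS]; exact ⟨hs, hsT⟩
  have hL := (hWd _ hmem).hasFDerivWithinAt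
  set L := fderivWithin ℝ (fun p : ℝ × ℝ => W p.1 p.2) S (s, c s) with hLdef
  have hcurve : HasDerivWithinAt (fun s' => ((s', c s') : ℝ × ℝ)) ((1 : ℝ), v) (Icc 0 t) s :=
    ((hasDerivAt_id s).prodMk hc).hasDerivWithinAt
  have hmap : MapsTo (fun s' => ((s', c s') : ℝ × ℝ)) (Icc 0 t) S := by
    intro a ha; rw [hS]
    exact ⟨ha.1, lt_of_le_of_lt (by exact_mod_cast ha.2) htT⟩
  have hcomp := hL.comp_hasDerivWithinAt s hcurve hmap
  have h1 : Wt s (c s) = L (1, 0) := dgh_slice_t hS hs hsT hL (hWt s (c s) hs hsT)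
  have h2 : Wx s (c s) = L (0, 1) := dgh_slice_x hS hs hsT hL (hWx s (c s) hs hsT)
  have hval : L (1, v) = Wt s (c s) + v * Wx s (c s) := by
    have he : ((1 : ℝ), v) = ((1 : ℝ), (0 : ℝ)) + v • ((0 : ℝ), (1 : ℝ)) := by
      simp [Prod.ext_iff]
    rw [he, map_add, _root_.map_smul, ← h1, ← h2, smul_eq_mul]
  rw [hval] at hcomp
  simpa [Function.comp_def] using hcomp

/-- The fundamental identity for the momentum `m = u - α²uₓₓ` of the DGH
equation `mₜ + c₀uₓ + umₓ + 2muₓ + γuₓₓₓ = 0`: along the particle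
trajectories `q`, `(m(t,q(t,x)) + c₀/2 + γ/(2α²))·(∂ₓq(t,x))² = m₀(x) + c₀/2 + γ/(2α²)`. -/
theorem dgh_momentum_identity
    (α c₀ γ : ℝ) (hα : 0 < α)
    (T : EReal) (hT : (0 : EReal) < T)
    (u ut ux uxx uxxx utxx : ℝ → ℝ → ℝ)
    (huC3 : ContDiffOn ℝ 3 (fun p : ℝ × ℝ => u p.1 p.2)
      {p : ℝ × ℝ | 0 ≤ p.1 ∧ (p.1 : EReal) < T})
    (hut : ∀ t x : ℝ, 0 ≤ t → (t : EReal) < T →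
      HasDerivAt (fun s => u s x) (ut t x) t)
    (hux : ∀ t x : ℝ, 0 ≤ t → (t : EReal) < T →
      HasDerivAt (fun y => u t y) (ux t x) x)
    (huxx : ∀ t x : ℝ, 0 ≤ t → (t : EReal) < T →
      HasDerivAt (fun y => ux t y) (uxx t x) x)
    (huxxx : ∀ t x : ℝ, 0 ≤ t → (t : EReal) < T →
      HasDerivAt (fun y => uxx t y) (uxxx t x) x)
    (hutxx : ∀ t x : ℝ, 0 ≤ t → (t : EReal) < T →
      HasDerivAt (fun s => uxx s x) (utxx t x) t)
    -- the momentum form of the DGH equation: `mₜ + c₀uₓ + umₓ + 2muₓ + γuₓₓₓ = 0`,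
    -- with `m = u - α²uₓₓ`, `mₜ = uₜ - α²uₜₓₓ`, `mₓ = uₓ - α²uₓₓₓ`
    (hPDE : ∀ t x : ℝ, 0 ≤ t → (t : EReal) < T →
      (ut t x - α ^ 2 * utxx t x) + c₀ * ux t x
        + u t x * (ux t x - α ^ 2 * uxxx t x)
        + 2 * (u t x - α ^ 2 * uxx t x) * ux t x + γ * uxxx t x = 0)
    (q qx qtx : ℝ → ℝ → ℝ)
    (hq0 : ∀ x, q 0 x = x)
    (hqt : ∀ t x : ℝ, 0 ≤ t → (t : EReal) < T →
      HasDerivAt (fun s => q s x) (u t (q t x) - γ / α ^ 2) t)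
    (hqx : ∀ t x : ℝ, 0 ≤ t → (t : EReal) < T →
      HasDerivAt (fun y => q t y) (qx t x) x)
    -- `q` is twice continuously differentiable with equal mixed partial
    -- derivatives: `∂ₜ∂ₓq = ∂ₓ∂ₜq = ∂ₓ(u(t, q(t,·)) - γ/α²)`.
    (hmix_t : ∀ t x : ℝ, 0 ≤ t → (t : EReal) < T →
      HasDerivAt (fun s => qx s x) (qtx t x) t)
    (hmix_x : ∀ t x : ℝ, 0 ≤ t → (t : EReal) < T →
      HasDerivAt (fun y => u t (q t y) - γ / α ^ 2) (qtx t x) x) :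
    ∀ t x : ℝ, 0 ≤ t → (t : EReal) < T →
      ((u t (q t x) - α ^ 2 * uxx t (q t x)) + c₀ / 2 + γ / (2 * α ^ 2))
          * (qx t x) ^ 2
        = (u 0 x - α ^ 2 * uxx 0 x) + c₀ / 2 + γ / (2 * α ^ 2) := by
  intro t x ht htT
  have hα2 : (α : ℝ) ^ 2 ≠ 0 := pow_ne_zero 2 hα.ne'
  set S : Set (ℝ × ℝ) := {p : ℝ × ℝ | 0 ≤ p.1 ∧ (p.1 : EReal) < T} with hSdef
  -- `S` is convex with nonempty interior, hence has the unique differentiability property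
  have hconv : Convex ℝ S := by
    rintro p hp r hr a b ha hb hab
    refine ⟨?_, ?_⟩
    · have : (a • p + b • r).1 = a * p.1 + b * r.1 := by simp
      rw [this]
      exact add_nonneg (mul_nonneg ha hp.1) (mul_nonneg hb hr.1)
    · have h1 : (a • p + b • r).1 = a * p.1 + b * r.1 := by simp
      rw [h1]
      have hle : a * p.1 + b * r.1 ≤ max p.1 r.1 := by
        calc a * p.1 + b * r.1 ≤ a * max p.1 r.1 + b * max p.1 r.1 := by
              gcongr
              · exact le_max_left _ _
              · exact le_max_right _ _
          _ = max p.1 r.1 := by rw [← add_mul, hab, one_mul]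
      have hmax : ((max p.1 r.1 : ℝ) : EReal) < T := by
        rcases max_cases p.1 r.1 with ⟨h, _⟩ | ⟨h, _⟩ <;> rw [h]
        · exact hp.2
        · exact hr.2
      exact lt_of_le_of_lt (by exact_mod_cast hle) hmax
  have hint : (interior S).Nonempty := by
    obtain ⟨r, hr0, hrT⟩ := EReal.lt_iff_exists_real_btwn.mp hT
    have hr0' : (0 : ℝ) < r := by exact_mod_cast hr0
    have hsub : Set.Ioo (0 : ℝ) r ×ˢ (Set.univ : Set ℝ) ⊆ S := by
      rintro p ⟨⟨h1, h2⟩, -⟩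
      exact ⟨h1.le, lt_of_le_of_lt (by exact_mod_cast h2.le) hrT⟩
    refine ⟨(r / 2, 0), interior_maximal hsub (isOpen_Ioo.prod isOpen_univ) ?_⟩
    exact ⟨⟨half_pos hr0', half_lt_self hr0'⟩, Set.mem_univ _⟩
  have hud : UniqueDiffOn ℝ S := uniqueDiffOn_convex hconv hint
  -- joint differentiability of `uxx`, via identifications with derivatives of the C³ function
  have hGd : DifferentiableOn ℝ (fun p : ℝ × ℝ => u p.1 p.2) S :=
    huC3.differentiableOn (by norm_num)
  have hG1s : ContDiffOn ℝ 2
      (fun p : ℝ × ℝ => fderivWithin ℝ (fun p : ℝ × ℝ => u p.1 p.2) S p (0, 1)) S :=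
    (huC3.fderivWithin hud (by norm_num)).clm_apply contDiffOn_const
  have hG1d : DifferentiableOn ℝ
      (fun p : ℝ × ℝ => fderivWithin ℝ (fun p : ℝ × ℝ => u p.1 p.2) S p (0, 1)) S :=
    hG1s.differentiableOn (by norm_num)
  have hux_eq : ∀ s y : ℝ, 0 ≤ s → (s : EReal) < T →
      ux s y = fderivWithin ℝ (fun p : ℝ × ℝ => u p.1 p.2) S (s, y) (0, 1) := by
    intro s y hs hsT
    exact dgh_slice_x hSdef hs hsT (hGd _ ⟨hs, hsT⟩).hasFDerivWithinAt (hux s y hs hsT)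
  have huxx_eq : ∀ s y : ℝ, 0 ≤ s → (s : EReal) < T →
      uxx s y = fderivWithin ℝ
        (fun p : ℝ × ℝ => fderivWithin ℝ (fun p : ℝ × ℝ => u p.1 p.2) S p (0, 1))
        S (s, y) (0, 1) := by
    intro s y hs hsT
    have hd : HasDerivAt
        (fun y' => fderivWithin ℝ (fun p : ℝ × ℝ => u p.1 p.2) S (s, y') (0, 1))
        (uxx s y) y :=
      (huxx s y hs hsT).congr_of_eventuallyEq
        (Filter.Eventually.of_forall fun y' => (hux_eq s y' hs hsT).symm)
    exact dgh_slice_x hSdef hs hsT (hG1d _ ⟨hs, hsT⟩).hasFDerivWithinAt hd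
  have huxxD : DifferentiableOn ℝ (fun p : ℝ × ℝ => uxx p.1 p.2) S := by
    have hG2d : DifferentiableOn ℝ
        (fun p : ℝ × ℝ => fderivWithin ℝ
          (fun p : ℝ × ℝ => fderivWithin ℝ (fun p : ℝ × ℝ => u p.1 p.2) S p (0, 1))
          S p (0, 1)) S :=
      ((hG1s.fderivWithin (m := 1) hud (by norm_num)).clm_apply contDiffOn_const).differentiableOn
        one_ne_zero
    refine hG2d.congr fun p hp => ?_
    simpa using huxx_eq p.1 p.2 hp.1 hp.2
  -- the function that is constant along trajectories
  set F : ℝ → ℝ := fun s =>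
    ((u s (q s x) - α ^ 2 * uxx s (q s x)) + c₀ / 2 + γ / (2 * α ^ 2)) * (qx s x) ^ 2
    with hFdef
  have hF : ∀ s ∈ Set.Icc (0 : ℝ) t, HasDerivWithinAt F 0 (Set.Icc 0 t) s := by
    rintro s ⟨hs0, hst⟩
    have hsT : (s : EReal) < T := lt_of_le_of_lt (by exact_mod_cast hst) htT
    set Q := q s x with hQdef
    have hv : HasDerivAt (fun s' => q s' x) (u s Q - γ / α ^ 2) s := hqt s x hs0 hsT
    have hA : HasDerivWithinAt (fun s' => u s' (q s' x))
        (ut s Q + (u s Q - γ / α ^ 2) * ux s Q) (Set.Icc 0 t) s :=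
      dgh_chain hSdef hGd hut hux hs0 hst htT hv
    have hB : HasDerivWithinAt (fun s' => uxx s' (q s' x))
        (utxx s Q + (u s Q - γ / α ^ 2) * uxxx s Q) (Set.Icc 0 t) s :=
      dgh_chain hSdef huxxD hutxx huxxx hs0 hst htT hv
    have hqtx : qtx s x = ux s Q * qx s x := by
      refine (hmix_x s x hs0 hsT).unique ?_
      have h1 := HasDerivAt.comp x (hux s Q hs0 hsT) (hqx s x hs0 hsT)
      simpa [Function.comp] using h1.sub_const (γ / α ^ 2)
    have hCm : HasDerivWithinAt
        (fun s' => (u s' (q s' x) - α ^ 2 * uxx s' (q s' x)) + c₀ / 2 + γ / (2 * α ^ 2))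
        ((ut s Q + (u s Q - γ / α ^ 2) * ux s Q)
          - α ^ 2 * (utxx s Q + (u s Q - γ / α ^ 2) * uxxx s Q)) (Set.Icc 0 t) s :=
      ((hA.sub (hB.const_mul (α ^ 2))).add_const (c₀ / 2)).add_const (γ / (2 * α ^ 2))
    have hCp : HasDerivWithinAt (fun s' => (qx s' x) ^ 2)
        ((2 : ℕ) * (qx s x) ^ 1 * qtx s x) (Set.Icc 0 t) s :=
      (hmix_t s x hs0 hsT).hasDerivWithinAt.pow 2
    have hFD := hCm.mul hCp
    have hzero : ((ut s Q + (u s Q - γ / α ^ 2) * ux s Q)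
          - α ^ 2 * (utxx s Q + (u s Q - γ / α ^ 2) * uxxx s Q)) * (qx s x) ^ 2
        + ((u s (q s x) - α ^ 2 * uxx s (q s x)) + c₀ / 2 + γ / (2 * α ^ 2))
          * ((2 : ℕ) * (qx s x) ^ 1 * qtx s x) = 0 := by
      have hpde := hPDE s Q hs0 hsT
      rw [hqtx, ← hQdef]
      have hinv : α ^ 2 * α⁻¹ ^ 2 = 1 := by rw [← mul_pow, mul_inv_cancel₀ hα.ne', one_pow]
      linear_combination ((qx s x) ^ 2) * hpde + (γ * uxxx s Q * qx s x ^ 2) * hinv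
    rw [hzero] at hFD
    exact hFD
  have hcont : ContinuousOn F (Set.Icc 0 t) := fun s hs => (hF s hs).continuousWithinAt
  have hderiv : ∀ s ∈ Set.Ico (0 : ℝ) t, HasDerivWithinAt F 0 (Set.Ici s) s := by
    rintro s ⟨hs0, hst⟩
    refine (hF s ⟨hs0, hst.le⟩).mono_of_mem_nhdsWithin ?_
    refine mem_nhdsWithin.mpr ⟨Set.Iio t, isOpen_Iio, hst, ?_⟩
    rintro a ⟨h1, h2⟩
    exact ⟨hs0.trans h2, h1.le⟩
  have hconst := constant_of_has_deriv_right_zero hcont hderiv t ⟨ht, le_rfl⟩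
  have hqx0 : qx 0 x = 1 := by
    refine (hqx 0 x le_rfl hT).unique ?_
    simpa [hq0] using hasDerivAt_id' x
  calc ((u t (q t x) - α ^ 2 * uxx t (q t x)) + c₀ / 2 + γ / (2 * α ^ 2)) * (qx t x) ^ 2
      = F t := rfl
    _ = F 0 := hconst
    _ = (u 0 x - α ^ 2 * uxx 0 x) + c₀ / 2 + γ / (2 * α ^ 2) := by
        rw [hFdef]; simp [hq0, hqx0]
end

section
/- Let t₀ ∈ ℝ and T ∈ (t₀, ∞]. Suppose g : [t₀, T) → ℝ is differentiable, g(t₀) < 0, and g′(t) ≤ −(1/4)g(t)² for all t ∈ [t₀, T). Then T ≤ t₀ + 4/|g(t₀)|; in particular T < ∞. -/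
open Filter

private lemma riccati_key (t₀ : ℝ) (T : EReal)
    (g g' : ℝ → ℝ)
    (hderiv : ∀ t : ℝ, t₀ ≤ t → (t : EReal) < T →
      HasDerivWithinAt g (g' t) {s : ℝ | t₀ ≤ s ∧ (s : EReal) < T} t)
    (hg0 : g t₀ < 0)
    (hineq : ∀ t : ℝ, t₀ ≤ t → (t : EReal) < T → g' t ≤ -(1 / 4) * (g t) ^ 2)
    (t : ℝ) (ht₀ : t₀ ≤ t) (htT : (t : EReal) < T) :
    t ≤ t₀ + 4 / |g t₀| := by
  have habspos : (0:ℝ) < |g t₀| := abs_pos.2 hg0.ne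
  rcases eq_or_lt_of_le ht₀ with rfl | hlt
  · have : 0 < 4 / |g t₀| := by positivity
    linarith
  set D : Set ℝ := Set.Icc t₀ t with hD
  have hsub : D ⊆ {s : ℝ | t₀ ≤ s ∧ (s : EReal) < T} := by
    intro x hx
    exact ⟨hx.1, lt_of_le_of_lt (EReal.coe_le_coe_iff.2 hx.2) htT⟩
  have hderivD : ∀ x ∈ D, HasDerivWithinAt g (g' x) D x := by
    intro x hx
    exact (hderiv x (hsub hx).1 (hsub hx).2).mono hsub
  have hineqD : ∀ x ∈ D, g' x ≤ -(1 / 4) * (g x) ^ 2 := fun x hx =>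
    hineq x (hsub hx).1 (hsub hx).2
  have hcont : ContinuousOn g D := fun x hx => (hderivD x hx).continuousWithinAt
  have hint : interior D ⊆ D := interior_subset
  have hanti : AntitoneOn g D := by
    apply antitoneOn_of_hasDerivWithinAt_nonpos (convex_Icc _ _) hcont
      (fun x hx => (hderivD x (hint hx)).mono hint)
    intro x hx
    have := hineqD x (hint hx)
    nlinarith [sq_nonneg (g x)]
  have hneg : ∀ x ∈ D, g x < 0 := fun x hx =>
    lt_of_le_of_lt (hanti (Set.left_mem_Icc.2 ht₀) hx hx.1) hg0
  -- derivative of h = g⁻¹ at interior points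
  have hioo : interior D = Set.Ioo t₀ t := interior_Icc
  have hDA : ∀ x ∈ interior D, HasDerivAt (fun s => (g s)⁻¹) (-(g' x) / g x ^ 2) x := by
    intro x hx
    have hmem : D ∈ nhds x := by
      rw [hioo] at hx
      exact Icc_mem_nhds hx.1 hx.2
    exact ((hderivD x (hint hx)).hasDerivAt hmem).inv (hneg x (hint hx)).ne
  have hdiff : DifferentiableOn ℝ (fun s => (g s)⁻¹) (interior D) := fun x hx =>
    (hDA x hx).differentiableAt.differentiableWithinAt
  have hcont' : ContinuousOn (fun s => (g s)⁻¹) D :=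
    hcont.inv₀ (fun x hx => (hneg x hx).ne)
  have hdge : ∀ x ∈ interior D, (1/4 : ℝ) ≤ deriv (fun s => (g s)⁻¹) x := by
    intro x hx
    rw [(hDA x hx).deriv]
    have h1 := hineqD x (hint hx)
    have hne := (hneg x (hint hx)).ne
    have h2 : (0:ℝ) < g x ^ 2 := by positivity
    rw [le_div_iff₀ h2]
    nlinarith
  have hmvt := (convex_Icc t₀ t).mul_sub_le_image_sub_of_le_deriv hcont' hdiff hdge
    t₀ (Set.left_mem_Icc.2 ht₀) t (Set.right_mem_Icc.2 ht₀) ht₀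
  have hgt0 : (g t₀)⁻¹ < 0 := inv_neg''.2 hg0
  have hgtneg : (g t)⁻¹ < 0 := inv_neg''.2 (hneg t (Set.right_mem_Icc.2 ht₀))
  have habs : |g t₀| = -(g t₀) := abs_of_neg hg0
  have : t - t₀ ≤ 4 / |g t₀| := by
    rw [le_div_iff₀ habspos, habs]
    have hinv : (g t₀)⁻¹ * (g t₀) = 1 := inv_mul_cancel₀ hg0.ne
    nlinarith
  linarith

/-- Riccati-type blow-up lemma: if `g` is differentiable on `[t₀, T)` with
`g(t₀) < 0` and `g′ ≤ -(1/4)g²` there, then `T ≤ t₀ + 4/|g(t₀)|`; in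
particular `T < ⊤`. -/
theorem riccati_blowup
    (t₀ : ℝ) (T : EReal) (hT : (t₀ : EReal) < T)
    (g g' : ℝ → ℝ)
    (hderiv : ∀ t : ℝ, t₀ ≤ t → (t : EReal) < T →
      HasDerivWithinAt g (g' t) {s : ℝ | t₀ ≤ s ∧ (s : EReal) < T} t)
    (hg0 : g t₀ < 0)
    (hineq : ∀ t : ℝ, t₀ ≤ t → (t : EReal) < T → g' t ≤ -(1 / 4) * (g t) ^ 2) :
    T ≤ ((t₀ + 4 / |g t₀| : ℝ) : EReal) ∧ T < ⊤ := by
  have key := riccati_key t₀ T g g' hderiv hg0 hineq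
  have hmain : T ≤ ((t₀ + 4 / |g t₀| : ℝ) : EReal) := by
    by_contra h
    push_neg at h
    obtain ⟨z, hz1, hz2⟩ := EReal.exists_between_coe_real h
    have hz1' : t₀ + 4 / |g t₀| < z := EReal.coe_lt_coe_iff.1 hz1
    have habspos : (0:ℝ) < |g t₀| := abs_pos.2 hg0.ne
    have hpos : 0 < 4 / |g t₀| := by positivity
    have hz0 : t₀ ≤ z := by linarith
    have := key z hz0 hz2
    linarith
  exact ⟨hmain, lt_of_le_of_lt hmain (EReal.coe_lt_top _)⟩
end

section
/- Let T ∈ (0, ∞] and let A, B : [0,T) → ℝ be differentiable functions satisfying A(0) > 0, B(0) < 0, and, for all t ∈ [0,T), A′(t) ≥ −(1/2)A(t)B(t) and B′(t) ≤ (1/2)A(t)B(t). Then T ≤ 2/√(−A(0)B(0)); in particular T < ∞. -/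
open Filter

private lemma key_ineq (a b a' b' : ℝ) (ha : 0 < a) (hb : b < 0)
    (ha' : a' ≥ -(1 / 2) * (a * b)) (hb' : b' ≤ 1 / 2 * (a * b)) :
    a' * b + a * b' ≤ -(-(a * b) * Real.sqrt (-(a * b))) := by
  set s := Real.sqrt (-(a * b)) with hs
  have hP : 0 < -(a * b) := by nlinarith
  have hs2 : s ^ 2 = -(a * b) := Real.sq_sqrt hP.le
  have hspos : 0 < s := Real.sqrt_pos.2 hP
  -- s ≤ (a - b)/2
  have hsle : s ≤ (a - b) / 2 := by
    rw [hs, show (a - b) / 2 = Real.sqrt (((a - b) / 2) ^ 2) from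
      (Real.sqrt_sq (by nlinarith)).symm]
    exact Real.sqrt_le_sqrt (by nlinarith [sq_nonneg (a + b)])
  have h1 : a' * b ≤ (-(1 / 2) * (a * b)) * b := by nlinarith
  have h2 : a * b' ≤ a * (1 / 2 * (a * b)) := by nlinarith
  nlinarith [mul_pos ha (neg_pos.2 hb), mul_nonneg hspos.le hspos.le]

/-- Appendix blow-up lemma: if `A(0) > 0 > B(0)`, `A′ ≥ -(1/2)AB` and
`B′ ≤ (1/2)AB` on `[0,T)`, then `T ≤ 2/√(-A(0)B(0))`; in particular `T < ∞`. -/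
theorem appendix_blowup
    (T : EReal) (hT : (0 : EReal) < T)
    (A B A' B' : ℝ → ℝ)
    (hA : ∀ t : ℝ, 0 ≤ t → (t : EReal) < T →
      HasDerivWithinAt A (A' t) {s : ℝ | 0 ≤ s ∧ (s : EReal) < T} t)
    (hB : ∀ t : ℝ, 0 ≤ t → (t : EReal) < T →
      HasDerivWithinAt B (B' t) {s : ℝ | 0 ≤ s ∧ (s : EReal) < T} t)
    (hA0 : 0 < A 0) (hB0 : B 0 < 0)
    (hA' : ∀ t : ℝ, 0 ≤ t → (t : EReal) < T → A' t ≥ -(1 / 2) * (A t * B t))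
    (hB' : ∀ t : ℝ, 0 ≤ t → (t : EReal) < T → B' t ≤ (1 / 2) * (A t * B t)) :
    T ≤ ((2 / Real.sqrt (-(A 0 * B 0)) : ℝ) : EReal) ∧ T < ⊤ := by
  have hP0 : 0 < -(A 0 * B 0) := by nlinarith
  set c : ℝ := 2 / Real.sqrt (-(A 0 * B 0)) with hc
  have hcpos : 0 < c := div_pos two_pos (Real.sqrt_pos.2 hP0)
  -- Main real estimate: any real time below T is < c.
  have main : ∀ t₁ : ℝ, 0 ≤ t₁ → (t₁ : EReal) < T → t₁ < c := by
    intro t₁ ht₁0 ht₁T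
    rcases eq_or_lt_of_le ht₁0 with h0 | h0
    · exact h0 ▸ hcpos
    set I := Set.Icc (0 : ℝ) t₁ with hI
    have hIS : I ⊆ {s : ℝ | 0 ≤ s ∧ (s : EReal) < T} := by
      intro s hs
      exact ⟨hs.1, lt_of_le_of_lt (EReal.coe_le_coe_iff.2 hs.2) ht₁T⟩
    have hAd : ∀ s ∈ I, HasDerivWithinAt A (A' s) I s := fun s hs =>
      (hA s (hIS hs).1 (hIS hs).2).mono hIS
    have hBd : ∀ s ∈ I, HasDerivWithinAt B (B' s) I s := fun s hs =>
      (hB s (hIS hs).1 (hIS hs).2).mono hIS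
    have hAc : ContinuousOn A I := fun s hs => (hAd s hs).continuousWithinAt
    have hBc : ContinuousOn B I := fun s hs => (hBd s hs).continuousWithinAt
    -- Step 1: sign preservation
    have sign : ∀ s ∈ I, 0 < A s ∧ B s < 0 := by
      by_contra hcon
      push_neg at hcon
      obtain ⟨s₀, hs₀I, hs₀⟩ := hcon
      set E : Set ℝ := (I ∩ A ⁻¹' Set.Iic 0) ∪ (I ∩ B ⁻¹' Set.Ici 0) with hE
      have hs₀E : s₀ ∈ E := by
        by_cases hAs : 0 < A s₀
        · exact Or.inr ⟨hs₀I, hs₀ hAs⟩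
        · exact Or.inl ⟨hs₀I, le_of_not_gt hAs⟩
      have hEclosed : IsClosed E :=
        ((hAc.preimage_isClosed_of_isClosed isClosed_Icc isClosed_Iic).union
          (hBc.preimage_isClosed_of_isClosed isClosed_Icc isClosed_Ici))
      have hEI : E ⊆ I := by
        rintro x (⟨hx, _⟩ | ⟨hx, _⟩) <;> exact hx
      have hEbdd : BddBelow E := ⟨0, fun x hx => (hEI hx).1⟩
      have hEne : E.Nonempty := ⟨s₀, hs₀E⟩
      set t₂ := sInf E with ht₂
      have ht₂E : t₂ ∈ E := hEclosed.csInf_mem hEne hEbdd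
      have ht₂I : t₂ ∈ I := hEI ht₂E
      -- on [0, t₂), both signs hold
      have hsign' : ∀ x, 0 ≤ x → x < t₂ → 0 < A x ∧ B x < 0 := by
        intro x hx0 hxt
        have hxE : x ∉ E := fun hxE => absurd (csInf_le hEbdd hxE) (not_le.2 hxt)
        have hxI : x ∈ I := ⟨hx0, le_trans hxt.le ht₂I.2⟩
        constructor
        · by_contra h
          exact hxE (Or.inl ⟨hxI, le_of_not_gt h⟩)
        · by_contra h
          exact hxE (Or.inr ⟨hxI, le_of_not_gt h⟩)
      set J := Set.Icc (0 : ℝ) t₂ with hJ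
      have hJI : J ⊆ I := Set.Icc_subset_Icc le_rfl ht₂I.2
      have hintJ : interior J = Set.Ioo 0 t₂ := interior_Icc
      have hmemJ : ∀ x ∈ interior J, x ∈ I ∧ 0 < A x ∧ B x < 0 := by
        intro x hx
        rw [hintJ] at hx
        exact ⟨⟨hx.1.le, le_trans hx.2.le ht₂I.2⟩, hsign' x hx.1.le hx.2⟩
      have hAmono : MonotoneOn A J := by
        apply monotoneOn_of_hasDerivWithinAt_nonneg (convex_Icc _ _) (hAc.mono hJI)
          (f' := A') (fun x hx => (hAd x (hmemJ x hx).1).mono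
            (by rw [hintJ]; exact fun y hy => ⟨hy.1.le, le_trans hy.2.le ht₂I.2⟩))
        intro x hx
        obtain ⟨hxI, hax, hbx⟩ := hmemJ x hx
        have := hA' x (hIS hxI).1 (hIS hxI).2
        nlinarith
      have hBanti : AntitoneOn B J := by
        apply antitoneOn_of_hasDerivWithinAt_nonpos (convex_Icc _ _) (hBc.mono hJI)
          (f' := B') (fun x hx => (hBd x (hmemJ x hx).1).mono
            (by rw [hintJ]; exact fun y hy => ⟨hy.1.le, le_trans hy.2.le ht₂I.2⟩))
        intro x hx
        obtain ⟨hxI, hax, hbx⟩ := hmemJ x hx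
        have := hB' x (hIS hxI).1 (hIS hxI).2
        nlinarith
      have h0J : (0 : ℝ) ∈ J := ⟨le_rfl, ht₂I.1⟩
      have ht₂J : t₂ ∈ J := ⟨ht₂I.1, le_rfl⟩
      have hAt₂ : 0 < A t₂ := lt_of_lt_of_le hA0 (hAmono h0J ht₂J ht₂I.1)
      have hBt₂ : B t₂ < 0 := lt_of_le_of_lt (hBanti h0J ht₂J ht₂I.1) hB0
      rcases ht₂E with ⟨_, h⟩ | ⟨_, h⟩
      · exact absurd h (not_le.2 hAt₂)
      · exact absurd h (not_le.2 hBt₂)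
    -- Step 2: the function φ = 1/√(-AB) + t/2 is antitone on I
    set φ : ℝ → ℝ := fun s => (Real.sqrt (-(A s * B s)))⁻¹ + s / 2 with hφ
    have hPpos : ∀ s ∈ I, 0 < -(A s * B s) := by
      intro s hs
      obtain ⟨ha, hb⟩ := sign s hs
      nlinarith
    have hsqrt_ne : ∀ s ∈ I, Real.sqrt (-(A s * B s)) ≠ 0 := fun s hs =>
      (Real.sqrt_pos.2 (hPpos s hs)).ne'
    have hφc : ContinuousOn φ I := by
      apply ContinuousOn.add
      · exact ContinuousOn.inv₀
          (Real.continuous_sqrt.comp_continuousOn (hAc.mul hBc).neg) hsqrt_ne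
      · exact (continuous_id.div_const 2).continuousOn
    set D : ℝ → ℝ := fun x =>
      -(1 / (2 * Real.sqrt (-(A x * B x))) * -(A' x * B x + A x * B' x)) /
        Real.sqrt (-(A x * B x)) ^ 2 + 1 / 2 with hD
    have hintI : interior I = Set.Ioo 0 t₁ := interior_Icc
    have hsubI : interior I ⊆ I := interior_subset
    have hφ' : ∀ x ∈ interior I, HasDerivWithinAt φ (D x) (interior I) x := by
      intro x hx
      have hxI : x ∈ I := hsubI hx
      have hf : HasDerivWithinAt (fun s => -(A s * B s))
          (-(A' x * B x + A x * B' x)) (interior I) x :=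
        (((hAd x hxI).mono hsubI).mul ((hBd x hxI).mono hsubI)).neg
      have hsq : HasDerivWithinAt (fun s => Real.sqrt (-(A s * B s)))
          (1 / (2 * Real.sqrt (-(A x * B x))) * -(A' x * B x + A x * B' x))
          (interior I) x :=
        (Real.hasDerivAt_sqrt (hPpos x hxI).ne').comp_hasDerivWithinAt x hf
      exact (hsq.inv (hsqrt_ne x hxI)).add ((hasDerivWithinAt_id x _).div_const 2)
    have hDnonpos : ∀ x ∈ interior I, D x ≤ 0 := by
      intro x hx
      have hxI : x ∈ I := hsubI hx
      obtain ⟨ha, hb⟩ := sign x hxI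
      have hkey : A' x * B x + A x * B' x ≤
          -(-(A x * B x) * Real.sqrt (-(A x * B x))) :=
        key_ineq _ _ _ _ ha hb (hA' x (hIS hxI).1 (hIS hxI).2)
          (hB' x (hIS hxI).1 (hIS hxI).2)
      set s := Real.sqrt (-(A x * B x)) with hsdef
      have hspos : 0 < s := Real.sqrt_pos.2 (hPpos x hxI)
      have hs2 : s ^ 2 = -(A x * B x) := Real.sq_sqrt (hPpos x hxI).le
      set q := A' x * B x + A x * B' x with hq
      have hq3 : q ≤ -(s ^ 3) := by nlinarith
      have hrw : D x = q / (2 * s ^ 3) + 1 / 2 := by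
        rw [hD]
        show -(1 / (2 * s) * -q) / s ^ 2 + 1 / 2 = q / (2 * s ^ 3) + 1 / 2
        field_simp
      rw [hrw]
      have : q / (2 * s ^ 3) ≤ -(1 / 2) := by
        rw [div_le_iff₀ (by positivity)]
        nlinarith
      linarith
    have hanti : AntitoneOn φ I :=
      antitoneOn_of_hasDerivWithinAt_nonpos (convex_Icc _ _) hφc hφ' hDnonpos
    have h0I : (0 : ℝ) ∈ I := ⟨le_rfl, ht₁0⟩
    have ht₁I : t₁ ∈ I := ⟨ht₁0, le_rfl⟩
    have hle : φ t₁ ≤ φ 0 := hanti h0I ht₁I ht₁0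
    have hφ0 : φ 0 = (Real.sqrt (-(A 0 * B 0)))⁻¹ := by simp [hφ]
    have hφt₁pos : 0 < (Real.sqrt (-(A t₁ * B t₁)))⁻¹ :=
      inv_pos.2 (Real.sqrt_pos.2 (hPpos t₁ ht₁I))
    have ht₁lt : t₁ / 2 < (Real.sqrt (-(A 0 * B 0)))⁻¹ := by
      rw [hφ0] at hle
      have : φ t₁ = (Real.sqrt (-(A t₁ * B t₁)))⁻¹ + t₁ / 2 := rfl
      linarith [this ▸ hle]
    rw [hc, div_eq_mul_inv]
    linarith
  have hTle : T ≤ ((c : ℝ) : EReal) := by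
    by_contra hlt
    push_neg at hlt
    obtain ⟨r, hr1, hr2⟩ := exists_between hlt
    have hrne_top : r ≠ ⊤ := (lt_of_lt_of_le hr2 le_top).ne
    have hrne_bot : r ≠ ⊥ := (lt_trans (show (⊥ : EReal) < (c : ℝ) from bot_lt_iff_ne_bot.2 (by simp)) hr1).ne'
    lift r to ℝ using ⟨hrne_top, hrne_bot⟩
    have hcr : c < r := EReal.coe_lt_coe_iff.1 hr1
    have : r < c := main r (le_of_lt (lt_trans hcpos hcr)) hr2
    linarith
  exact ⟨hTle, lt_of_le_of_lt hTle (EReal.coe_lt_top _)⟩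
end
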